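/- arXiv:2411.10696 — 7 statements merged into one kernel-verified Lean document; each statement's English description precedes it below -/
import Mathlib

section
/- If L(θ) − min L ≤ μ R² / 4, then ‖θ − θ*‖₂ ≤ R (Lemma 2, Parameter Bound). -/
open Matrix Filter
open scoped RealInnerProductSpace

/-- Quadratic form of a matrix viewed as an operator on Euclidean space. -/
noncomputable def hessQF {d : ℕ} (A : Matrix (Fin d) (Fin d) ℝ)
    (v : EuclideanSpace ℝ (Fin d)) : ℝ :=
  ⟪v, Matrix.toEuclideanLin A v⟫

/-- If derivative at every point of [0,1] is `≥ 0`, the function is monotone there. -/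
lemma mono_aux {f : ℝ → ℝ} {f' : ℝ → ℝ} (hf : ∀ t, HasDerivAt f (f' t) t)
    (hpos : ∀ t ∈ Set.Icc (0:ℝ) 1, 0 ≤ f' t) : MonotoneOn f (Set.Icc (0:ℝ) 1) := by
  apply monotoneOn_of_deriv_nonneg (convex_Icc 0 1)
  · exact fun t _ => (hf t).continuousAt.continuousWithinAt
  · exact fun t _ => (hf t).differentiableAt.differentiableWithinAt
  · intro t ht
    rw [(hf t).deriv]
    exact hpos t (Set.mem_of_mem_of_subset ht (by rw [interior_Icc]; exact Set.Ioo_subset_Icc_self))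

set_option maxHeartbeats 1000000 in
/-- Lemma 2 (Parameter Bound): if `L θ - min L ≤ μ R² / 4` then `‖θ - θ*‖ ≤ R`. -/
theorem stmt_2 (d : ℕ) (hd : 1 ≤ d)
    (L : EuclideanSpace ℝ (Fin d) → ℝ) (hL : ContDiff ℝ 2 L)
    (hconv : StrictConvexOn ℝ Set.univ L)
    (θs : EuclideanSpace ℝ (Fin d))
    (hmin : ∀ θ, θ ≠ θs → L θs < L θ)
    (hgrad0 : gradient L θs = 0)
    (H : EuclideanSpace ℝ (Fin d) → Matrix (Fin d) (Fin d) ℝ)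
    (hH : ∀ x, HasFDerivAt (gradient L)
      (LinearMap.toContinuousLinearMap (Matrix.toEuclideanLin (H x))) x)
    (hpd : ∀ x, (H x).PosDef)
    (μ : ℝ) (hμpos : 0 < μ)
    (hμlb : ∀ v : EuclideanSpace ℝ (Fin d), μ * ‖v‖ ^ 2 ≤ hessQF (H θs) v)
    (hμeig : ∃ v : EuclideanSpace ℝ (Fin d), v ≠ 0 ∧
      Matrix.toEuclideanLin (H θs) v = μ • v)
    (R : ℝ) (hR : 0 < R)
    (hA2 : ∀ θ θ' : EuclideanSpace ℝ (Fin d), ‖θ - θ'‖ ≤ R →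
      ∀ v, (1/2) * hessQF (H θ') v ≤ hessQF (H θ) v ∧
        hessQF (H θ) v ≤ 2 * hessQF (H θ') v)
    (θ : EuclideanSpace ℝ (Fin d))
    (hloss : L θ - L θs ≤ μ * R ^ 2 / 4) :
    ‖θ - θs‖ ≤ R := by
  by_contra hcon
  push_neg at hcon
  set n : ℝ := ‖θ - θs‖ with hn
  have hnpos : 0 < n := lt_trans hR hcon
  set t0 : ℝ := R / n with ht0
  have ht0pos : 0 < t0 := div_pos hR hnpos
  have ht0lt : t0 < 1 := (div_lt_one hnpos).2 hcon
  set u : EuclideanSpace ℝ (Fin d) := t0 • (θ - θs) with hu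
  have hunorm : ‖u‖ = R := by
    rw [hu, norm_smul, Real.norm_eq_abs, abs_of_pos ht0pos, ht0]
    field_simp
    exact hn.symm
  set φ : ℝ → EuclideanSpace ℝ (Fin d) := fun t => θs + t • u with hφ
  have hφ0 : φ 0 = θs := by simp [hφ]
  have hφd : ∀ t : ℝ, HasDerivAt φ u t := by
    intro t
    simpa [hφ] using ((hasDerivAt_id t).smul_const u).const_add θs
  have hLd : Differentiable ℝ L := hL.differentiable (by norm_num)
  -- derivative of g = L ∘ φ
  have hg : ∀ t : ℝ, HasDerivAt (fun s => L (φ s)) ⟪gradient L (φ t), u⟫ t := by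
    intro t
    have h1 : HasFDerivAt L (InnerProductSpace.toDual ℝ _ (gradient L (φ t))) (φ t) :=
      (hLd (φ t)).hasGradientAt.hasFDerivAt
    have := h1.comp_hasDerivAt t (hφd t)
    simpa [Function.comp_def] using this
  -- derivative of h = t ↦ ⟪grad L (φ t), u⟫
  have hh : ∀ t : ℝ, HasDerivAt (fun s => ⟪gradient L (φ s), u⟫) (hessQF (H (φ t)) u) t := by
    intro t
    have h1 : HasDerivAt (fun s => gradient L (φ s)) (Matrix.toEuclideanLin (H (φ t)) u) t := by
      have := (hH (φ t)).comp_hasDerivAt t (hφd t)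
      simpa [Function.comp_def] using this
    have h2 := h1.inner ℝ (hasDerivAt_const t u)
    have heq : (⟪gradient L (φ t), (0:EuclideanSpace ℝ (Fin d))⟫
        + ⟪Matrix.toEuclideanLin (H (φ t)) u, u⟫ : ℝ) = hessQF (H (φ t)) u := by
      rw [inner_zero_right, zero_add, real_inner_comm]
      rfl
    exact heq ▸ h2
  -- lower bound for the second derivative on [0,1]
  have hlow : ∀ t ∈ Set.Icc (0:ℝ) 1, μ * R ^ 2 / 2 ≤ hessQF (H (φ t)) u := by
    intro t ht
    have hdist : ‖φ t - θs‖ ≤ R := by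
      have : φ t - θs = t • u := by simp [hφ]
      rw [this, norm_smul, Real.norm_eq_abs, abs_of_nonneg ht.1, hunorm]
      nlinarith [ht.2, hR]
    have h1 := (hA2 (φ t) θs hdist u).1
    have h2 := hμlb u
    rw [hunorm] at h2
    linarith
  -- Step A : ⟪grad L (φ t), u⟫ ≥ (μ R²/2) t  on [0,1]
  have stepA : ∀ t ∈ Set.Icc (0:ℝ) 1, μ * R ^ 2 / 2 * t ≤ ⟪gradient L (φ t), u⟫ := by
    intro t ht
    have hk : ∀ s : ℝ, HasDerivAt (fun s => ⟪gradient L (φ s), u⟫ - μ * R ^ 2 / 2 * s)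
        (hessQF (H (φ s)) u - μ * R ^ 2 / 2) s := by
      intro s
      exact (hh s).sub (by simpa using (hasDerivAt_id s).const_mul (μ * R ^ 2 / 2))
    have hm := mono_aux hk (fun s hs => by linarith [hlow s hs])
    have := hm (Set.left_mem_Icc.2 zero_le_one) ht ht.1
    simp only [hφ0, hgrad0, inner_zero_left, mul_zero, sub_zero] at this
    linarith
  -- Step B : L (φ 1) - L θs ≥ μ R² / 4
  have stepB : μ * R ^ 2 / 4 ≤ L (φ 1) - L θs := by
    have hF : ∀ s : ℝ, HasDerivAt (fun s => L (φ s) - μ * R ^ 2 / 2 * (s ^ 2 / 2))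
        (⟪gradient L (φ s), u⟫ - μ * R ^ 2 / 2 * s) s := by
      intro s
      have h2 : HasDerivAt (fun s : ℝ => s ^ 2 / 2) s s := by
        simpa using (hasDerivAt_pow 2 s).div_const 2
      exact (hg s).sub (by simpa using h2.const_mul (μ * R ^ 2 / 2))
    have hm := mono_aux hF (fun s hs => by linarith [stepA s hs])
    have := hm (Set.left_mem_Icc.2 zero_le_one) (Set.right_mem_Icc.2 zero_le_one) zero_le_one
    simp only [hφ0] at this
    norm_num at this
    linarith
  -- convexity step
  have hcomb : φ 1 = (1 - t0) • θs + t0 • θ := by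
    rw [hφ, hu]
    simp only [one_smul]
    module
  have hcvx := hconv.convexOn.2 (Set.mem_univ θs) (Set.mem_univ θ)
    (by linarith : (0:ℝ) ≤ 1 - t0) (le_of_lt ht0pos) (by ring)
  rw [← hcomb] at hcvx
  simp only [smul_eq_mul] at hcvx
  have h1 : L (φ 1) - L θs ≤ t0 * (L θ - L θs) := by nlinarith
  have h2 : t0 * (L θ - L θs) ≤ t0 * (μ * R ^ 2 / 4) :=
    mul_le_mul_of_nonneg_left hloss (le_of_lt ht0pos)
  have hq : 0 < μ * R ^ 2 / 4 := by positivity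
  nlinarith
end

section
/- If ‖∇L(θ)‖₂ ≤ μ R / 2, then ‖θ − θ*‖₂ ≤ R (Lemma 3, Gradient Norm Bound). -/
open Matrix Filter
open scoped RealInnerProductSpace

lemma hessQF_pos {d : ℕ} {A : Matrix (Fin d) (Fin d) ℝ} (hA : A.PosDef)
    {v : EuclideanSpace ℝ (Fin d)} (hv : v ≠ 0) : 0 < hessQF A v := by
  have h := hA.dotProduct_mulVec_pos (x := WithLp.equiv 2 _ v) (by simpa using hv)
  simpa [hessQF, Matrix.toEuclideanLin_apply, PiLp.inner_apply, dotProduct,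
    mul_comm] using h

lemma phi_deriv {d : ℕ} (L : EuclideanSpace ℝ (Fin d) → ℝ)
    (H : EuclideanSpace ℝ (Fin d) → Matrix (Fin d) (Fin d) ℝ)
    (hH : ∀ x, HasFDerivAt (gradient L)
      (LinearMap.toContinuousLinearMap (Matrix.toEuclideanLin (H x))) x)
    (a u : EuclideanSpace ℝ (Fin d)) (t : ℝ) :
    HasDerivAt (fun s : ℝ => ⟪gradient L (a + s • u), u⟫)
      (hessQF (H (a + t • u)) u) t := by
  have h1 : HasDerivAt (fun s : ℝ => a + s • u) u t := by
    simpa using ((hasDerivAt_id t).smul_const u).const_add a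
  have h2 : HasDerivAt (fun s : ℝ => gradient L (a + s • u))
      (Matrix.toEuclideanLin (H (a + t • u)) u) t := by
    exact (hH (a + t • u)).comp_hasDerivAt t h1
  have h3 := h2.inner ℝ (hasDerivAt_const t u)
  simpa [hessQF, real_inner_comm, mul_comm] using h3

lemma grad_inner_lb {d : ℕ} (L : EuclideanSpace ℝ (Fin d) → ℝ)
    (H : EuclideanSpace ℝ (Fin d) → Matrix (Fin d) (Fin d) ℝ)
    (hH : ∀ x, HasFDerivAt (gradient L)
      (LinearMap.toContinuousLinearMap (Matrix.toEuclideanLin (H x))) x)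
    (a u : EuclideanSpace ℝ (Fin d)) (c : ℝ)
    (hc : ∀ t ∈ Set.Icc (0:ℝ) 1, c ≤ hessQF (H (a + t • u)) u) :
    ⟪gradient L a, u⟫ + c ≤ ⟪gradient L (a + u), u⟫ := by
  set ψ := fun s : ℝ => ⟪gradient L (a + s • u), u⟫ - c * s with hψdef
  have hψ : ∀ t : ℝ, HasDerivAt ψ (hessQF (H (a + t • u)) u - c) t := by
    intro t
    have h2 := (phi_deriv L H hH a u t).sub ((hasDerivAt_id t).const_mul c)
    simp only [mul_one] at h2
    exact h2
  have hcont : ContinuousOn ψ (Set.Icc 0 1) :=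
    fun x _ => ((hψ x).continuousAt).continuousWithinAt
  have hdiff : DifferentiableOn ℝ ψ (interior (Set.Icc (0:ℝ) 1)) :=
    fun x _ => ((hψ x).differentiableAt).differentiableWithinAt
  have mono := monotoneOn_of_deriv_nonneg (convex_Icc 0 1) hcont hdiff ?_
  · have h01 := mono (Set.left_mem_Icc.2 zero_le_one) (Set.right_mem_Icc.2 zero_le_one)
      zero_le_one
    simp only [hψdef, zero_smul, add_zero, one_smul, mul_zero, mul_one, sub_zero] at h01
    linarith
  · intro x hx
    rw [interior_Icc] at hx
    rw [(hψ x).deriv]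
    have := hc x ⟨le_of_lt hx.1, le_of_lt hx.2⟩
    linarith

lemma grad_inner_strict {d : ℕ} (L : EuclideanSpace ℝ (Fin d) → ℝ)
    (H : EuclideanSpace ℝ (Fin d) → Matrix (Fin d) (Fin d) ℝ)
    (hH : ∀ x, HasFDerivAt (gradient L)
      (LinearMap.toContinuousLinearMap (Matrix.toEuclideanLin (H x))) x)
    (hpd : ∀ x, (H x).PosDef)
    (a : EuclideanSpace ℝ (Fin d)) {u : EuclideanSpace ℝ (Fin d)} (hu : u ≠ 0) :
    ⟪gradient L a, u⟫ < ⟪gradient L (a + u), u⟫ := by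
  set φ := fun s : ℝ => ⟪gradient L (a + s • u), u⟫ with hφdef
  have hcont : ContinuousOn φ (Set.Icc 0 1) :=
    fun x _ => ((phi_deriv L H hH a u x).continuousAt).continuousWithinAt
  have smono := strictMonoOn_of_deriv_pos (convex_Icc 0 1) hcont ?_
  · have h01 := smono (Set.left_mem_Icc.2 zero_le_one) (Set.right_mem_Icc.2 zero_le_one)
      zero_lt_one
    simpa [hφdef] using h01
  · intro x _
    rw [(phi_deriv L H hH a u x).deriv]
    exact hessQF_pos (hpd _) hu

/-- Lemma 3 (Gradient Norm Bound): if `‖∇L θ‖ ≤ μ R / 2` then `‖θ - θ*‖ ≤ R`. -/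
theorem stmt_3 (d : ℕ) (hd : 1 ≤ d)
    (L : EuclideanSpace ℝ (Fin d) → ℝ) (hL : ContDiff ℝ 2 L)
    (hconv : StrictConvexOn ℝ Set.univ L)
    (θs : EuclideanSpace ℝ (Fin d))
    (hmin : ∀ θ, θ ≠ θs → L θs < L θ)
    (hgrad0 : gradient L θs = 0)
    (H : EuclideanSpace ℝ (Fin d) → Matrix (Fin d) (Fin d) ℝ)
    (hH : ∀ x, HasFDerivAt (gradient L)
      (LinearMap.toContinuousLinearMap (Matrix.toEuclideanLin (H x))) x)
    (hpd : ∀ x, (H x).PosDef)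
    (μ : ℝ) (hμpos : 0 < μ)
    (hμlb : ∀ v : EuclideanSpace ℝ (Fin d), μ * ‖v‖ ^ 2 ≤ hessQF (H θs) v)
    (hμeig : ∃ v : EuclideanSpace ℝ (Fin d), v ≠ 0 ∧
      Matrix.toEuclideanLin (H θs) v = μ • v)
    (R : ℝ) (hR : 0 < R)
    (hA2 : ∀ θ θ' : EuclideanSpace ℝ (Fin d), ‖θ - θ'‖ ≤ R →
      ∀ v, (1/2) * hessQF (H θ') v ≤ hessQF (H θ) v ∧
        hessQF (H θ) v ≤ 2 * hessQF (H θ') v)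
    (θ : EuclideanSpace ℝ (Fin d))
    (hgradnorm : ‖gradient L θ‖ ≤ μ * R / 2) :
    ‖θ - θs‖ ≤ R := by
  by_contra hcon
  push_neg at hcon
  set s := ‖θ - θs‖ with hs
  have hspos : 0 < s := lt_trans hR hcon
  have hsne : s ≠ 0 := ne_of_gt hspos
  have hRne : R ≠ 0 := ne_of_gt hR
  set u := (R/s) • (θ - θs) with hu
  have hnu : ‖u‖ = R := by
    rw [hu, norm_smul, Real.norm_eq_abs, abs_of_pos (div_pos hR hspos), ← hs]
    field_simp
  have hu0 : u ≠ 0 := by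
    intro h
    rw [h, norm_zero] at hnu
    exact hRne hnu.symm
  have hstep1 : μ * R ^ 2 / 2 ≤ ⟪gradient L (θs + u), u⟫ := by
    have hlb := grad_inner_lb L H hH θs u (μ * R ^ 2 / 2) ?_
    · simpa [hgrad0] using hlb
    · intro t ht
      have hdist : ‖(θs + t • u) - θs‖ ≤ R := by
        have : (θs + t • u) - θs = t • u := by abel
        rw [this, norm_smul, Real.norm_eq_abs, hnu, abs_of_nonneg ht.1]
        nlinarith [ht.2]
      have h2 := (hA2 (θs + t • u) θs hdist u).1
      have h3 := hμlb u
      rw [hnu] at h3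
      linarith
  have hk : (0:ℝ) < (s - R) / R := div_pos (by linarith) hR
  have hw : θ - (θs + u) = ((s - R) / R) • u := by
    rw [hu, smul_smul]
    have hc : (s - R) / R * (R / s) = 1 - R / s := by field_simp
    rw [hc, sub_smul, one_smul]
    abel
  have hwne : ((s - R) / R) • u ≠ 0 := smul_ne_zero (ne_of_gt hk) hu0
  have hstrict := grad_inner_strict L H hH hpd (θs + u) hwne
  have hθeq : (θs + u) + ((s - R) / R) • u = θ := by rw [← hw]; abel
  rw [hθeq] at hstrict
  have e1 : ⟪gradient L (θs + u), ((s - R) / R) • u⟫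
      = ((s - R) / R) * ⟪gradient L (θs + u), u⟫ := real_inner_smul_right _ _ _
  have e2 : ⟪gradient L θ, ((s - R) / R) • u⟫
      = ((s - R) / R) * ⟪gradient L θ, u⟫ := real_inner_smul_right _ _ _
  rw [e1, e2] at hstrict
  have h4 : ⟪gradient L (θs + u), u⟫ < ⟪gradient L θ, u⟫ :=
    (mul_lt_mul_iff_right₀ hk).mp hstrict
  have h5 : ⟪gradient L θ, u⟫ ≤ ‖gradient L θ‖ * R := by
    calc ⟪gradient L θ, u⟫ ≤ ‖gradient L θ‖ * ‖u‖ := real_inner_le_norm _ _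
      _ = ‖gradient L θ‖ * R := by rw [hnu]
  nlinarith [hgradnorm]
end

section
/- For every starting point θ₀ there exists a continuously differentiable path θ : [0,1] → ℝ^d with θ(0) = θ₀ and θ(1) = θ*, satisfying the differential equation θ'(t) = −(∇²L(θ(t)))⁻¹ ∇L(θ₀) for all t ∈ [0,1], and along which the gradient interpolates linearly: ∇L(θ(t)) = (1 − t)·∇L(θ₀) for all t ∈ [0,1] (Lemma 4, Stability of Gradient Flow). -/
open Matrix Filter
open scoped Topology
open scoped RealInnerProductSpace

variable {E : Type*} [NormedAddCommGroup E] [InnerProductSpace ℝ E] [CompleteSpace E]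

lemma grad_convex_ineq {f : E → ℝ} (hf : ConvexOn ℝ Set.univ f) {x : E}
    (hd : DifferentiableAt ℝ f x) (y : E) :
    f x + ⟪gradient f x, y - x⟫ ≤ f y := by
  rcases eq_or_ne y x with rfl | hne
  · simp
  · set φ : ℝ → ℝ := fun s => f (x + s • (y - x)) with hφ
    have hφconv : ConvexOn ℝ Set.univ φ := by
      have := hf.comp_affineMap (AffineMap.lineMap x y : ℝ →ᵃ[ℝ] E)
      have heq : (f ∘ (AffineMap.lineMap x y : ℝ →ᵃ[ℝ] E)) = φ := by
        funext s
        simp only [Function.comp_apply, AffineMap.lineMap_apply_module, φ]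
        congr 1
        module
      rw [heq] at this
      simpa using this
    have hgrad : HasFDerivAt f (InnerProductSpace.toDual ℝ E (gradient f x)) x :=
      hasGradientAt_iff_hasFDerivAt.1 hd.hasGradientAt
    have hline : HasDerivAt (fun s : ℝ => x + s • (y - x)) (y - x) 0 := by
      simpa using ((hasDerivAt_id (0:ℝ)).smul_const (y - x)).const_add x
    have hφd : HasDerivAt φ ⟪gradient f x, y - x⟫ 0 := by
      have hgrad' : HasFDerivAt f ((InnerProductSpace.toDual ℝ E) (gradient f x))
          ((fun s : ℝ => x + s • (y - x)) 0) := by simpa using hgrad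
      have h := hgrad'.comp_hasDerivAt (x := (0:ℝ)) hline
      simpa [φ, InnerProductSpace.toDual_apply_apply, Function.comp_def] using h
    have hs := hφconv.le_slope_of_hasDerivAt (Set.mem_univ 0) (Set.mem_univ 1) one_pos hφd
    have h0 : φ 0 = f x := by simp [φ]
    have h1 : φ 1 = f y := by simp [φ]
    rw [slope_def_field] at hs
    rw [h0, h1] at hs
    simp at hs
    have hge : ⟪gradient f x, y - x⟫ = (fderiv ℝ f x) y - (fderiv ℝ f x) x := by
      simp [inner_sub_right]
    linarith

lemma grad_inj {f : E → ℝ} (hf : StrictConvexOn ℝ Set.univ f)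
    (hd : Differentiable ℝ f) : Function.Injective (gradient f) := by
  intro x y hxy
  by_contra hne
  set m : E := (2:ℝ)⁻¹ • (x + y) with hm
  have h1 := grad_convex_ineq hf.convexOn (hd x) m
  have h2 := grad_convex_ineq hf.convexOn (hd y) m
  have hstrict := hf.2 (Set.mem_univ x) (Set.mem_univ y) hne
    (by norm_num : (0:ℝ) < 2⁻¹) (by norm_num : (0:ℝ) < 2⁻¹) (by norm_num)
  have hmeq : (2:ℝ)⁻¹ • x + (2:ℝ)⁻¹ • y = m := by rw [hm]; module
  rw [hmeq] at hstrict
  have hzero : (m - x) + (m - y) = 0 := by rw [hm]; module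
  have hinner : ⟪gradient f x, m - x⟫ + ⟪gradient f y, m - y⟫ = 0 := by
    rw [hxy, ← inner_add_right, hzero, inner_zero_right]
  have : f m < f m := by
    calc f m < 2⁻¹ * f x + 2⁻¹ * f y := hstrict
    _ ≤ 2⁻¹ * (f x + ⟪gradient f x, m - x⟫ + (f y + ⟪gradient f y, m - y⟫)) := by linarith
    _ ≤ f m := by linarith
  exact lt_irrefl _ this

lemma sublevel_claim {f : E → ℝ} (hf : StrictConvexOn ℝ Set.univ f)
    (hd : Differentiable ℝ f) {t : ℝ} (ht : t ∈ Set.Icc (0:ℝ) 1) {x θ0 : E}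
    (h : gradient f x = (1 - t) • gradient f θ0) : f x ≤ f θ0 := by
  rcases eq_or_lt_of_le ht.1 with rfl | htpos
  · have : gradient f x = gradient f θ0 := by simpa using h
    rw [grad_inj hf hd this]
  · set a : ℝ := ⟪gradient f θ0, x - θ0⟫ with ha
    have h1 : f θ0 + a ≤ f x := grad_convex_ineq hf.convexOn (hd θ0) x
    have h2 := grad_convex_ineq hf.convexOn (hd x) θ0
    rw [h] at h2
    have hin : ⟪(1 - t) • gradient f θ0, θ0 - x⟫ = -((1 - t) * a) := by
      rw [real_inner_smul_left, ha]
      have : (θ0 - x) = -(x - θ0) := by abel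
      rw [this, inner_neg_right]
      ring
    rw [hin] at h2
    nlinarith [ht.2, htpos]

lemma sublevel_compact {d : ℕ} {L : EuclideanSpace ℝ (Fin d) → ℝ}
    (hcont : Continuous L)
    (hcoer : Tendsto L (Filter.comap norm Filter.atTop) Filter.atTop) (c : ℝ) :
    IsCompact {x | L x ≤ c} := by
  have hclosed : IsClosed {x | L x ≤ c} := isClosed_le hcont continuous_const
  have hmem : L ⁻¹' (Set.Ioi c) ∈ Filter.comap norm Filter.atTop :=
    hcoer (Ioi_mem_atTop c)
  rcases Filter.mem_comap.1 hmem with ⟨s, hs, hsub⟩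
  rcases Filter.mem_atTop_sets.1 hs with ⟨r, hr⟩
  have hb : {x : EuclideanSpace ℝ (Fin d) | L x ≤ c} ⊆ Metric.closedBall 0 r := by
    intro x hx
    by_contra hxr
    have : r ≤ ‖x‖ := by
      simp only [Metric.mem_closedBall, dist_zero_right, not_le] at hxr
      exact hxr.le
    have : L x > c := hsub (hr _ this)
    exact absurd hx (by simpa using this.not_ge)
  exact (isCompact_closedBall (0 : EuclideanSpace ℝ (Fin d)) r).of_isClosed_subset hclosed hb

set_option maxHeartbeats 2000000 in
/-- Lemma 4 (Stability of Gradient Flow): for every starting point `θ₀` there is a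
continuously differentiable path `γ : [0,1] → ℝ^d` with `γ 0 = θ₀`, `γ 1 = θ*`,
satisfying `γ'(t) = -(∇²L(γ t))⁻¹ ∇L(θ₀)`, along which
`∇L(γ t) = (1 - t) • ∇L(θ₀)`. -/
theorem stmt_4 (d : ℕ) (hd : 1 ≤ d)
    (L : EuclideanSpace ℝ (Fin d) → ℝ) (hL : ContDiff ℝ 2 L)
    (hconv : StrictConvexOn ℝ Set.univ L)
    (θs : EuclideanSpace ℝ (Fin d))
    (hmin : ∀ θ, θ ≠ θs → L θs < L θ)
    (hgrad0 : gradient L θs = 0)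
    (H : EuclideanSpace ℝ (Fin d) → Matrix (Fin d) (Fin d) ℝ)
    (hH : ∀ x, HasFDerivAt (gradient L)
      (LinearMap.toContinuousLinearMap (Matrix.toEuclideanLin (H x))) x)
    (hpd : ∀ x, (H x).PosDef)
    (hcoer : Tendsto L (Filter.comap norm Filter.atTop) Filter.atTop) :
    ∀ θ0 : EuclideanSpace ℝ (Fin d), ∃ γ : ℝ → EuclideanSpace ℝ (Fin d),
      ContDiffOn ℝ 1 γ (Set.Icc 0 1) ∧ γ 0 = θ0 ∧ γ 1 = θs ∧
      (∀ t ∈ Set.Icc (0:ℝ) 1, HasDerivWithinAt γ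
        (-(Matrix.toEuclideanLin ((H (γ t))⁻¹) (gradient L θ0))) (Set.Icc 0 1) t) ∧
      (∀ t ∈ Set.Icc (0:ℝ) 1, gradient L (γ t) = (1 - t) • gradient L θ0) := by
  classical
  intro θ0
  set F : EuclideanSpace ℝ (Fin d) → EuclideanSpace ℝ (Fin d) := gradient L with hF
  set g : EuclideanSpace ℝ (Fin d) := gradient L θ0 with hg
  have hLd : Differentiable ℝ L := hL.differentiable (by norm_num)
  have hF1 : ContDiff ℝ 1 F := by
    have h2 : ContDiff ℝ 1 (fderiv ℝ L) := hL.fderiv_right (by norm_num)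
    have heq : F = fun x =>
        (InnerProductSpace.toDual ℝ (EuclideanSpace ℝ (Fin d))).symm (fderiv ℝ L x) := rfl
    rw [heq]
    set T : (EuclideanSpace ℝ (Fin d) →L[ℝ] ℝ) →ₗ[ℝ] EuclideanSpace ℝ (Fin d) :=
      { toFun := fun f => (InnerProductSpace.toDual ℝ (EuclideanSpace ℝ (Fin d))).symm f
        map_add' := fun f h => by simp
        map_smul' := fun c f => by
          simp only [LinearIsometryEquiv.map_smulₛₗ, RingHom.id_apply]
          norm_num } with hT
    have : ContDiff ℝ 1 (fun f : EuclideanSpace ℝ (Fin d) →L[ℝ] ℝ =>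
        (InnerProductSpace.toDual ℝ (EuclideanSpace ℝ (Fin d))).symm f) :=
      (T.toContinuousLinearMap).contDiff
    exact this.comp h2
  have hFinj : Function.Injective F := grad_inj hconv hLd
  -- matrix facts
  have hdet : ∀ x, IsUnit (H x).det := fun x => (hpd x).det_pos.ne'.isUnit
  have hTE : ∀ (A B : Matrix (Fin d) (Fin d) ℝ) v,
      Matrix.toEuclideanLin A (Matrix.toEuclideanLin B v) = Matrix.toEuclideanLin (A * B) v := by
    intro A B v
    simp [Matrix.toEuclideanLin_apply, Matrix.mulVec_mulVec]
  have hTE1 : ∀ v : EuclideanSpace ℝ (Fin d),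
      Matrix.toEuclideanLin (1 : Matrix (Fin d) (Fin d) ℝ) v = v := by
    intro v
    simp [Matrix.toEuclideanLin_apply, Matrix.one_mulVec]
  -- the derivative as a linear equivalence
  set eL : EuclideanSpace ℝ (Fin d) →
      (EuclideanSpace ℝ (Fin d) ≃ₗ[ℝ] EuclideanSpace ℝ (Fin d)) := fun x =>
    LinearEquiv.ofLinear (Matrix.toEuclideanLin (H x)) (Matrix.toEuclideanLin (H x)⁻¹)
      (LinearMap.ext fun v => by
        rw [LinearMap.comp_apply, hTE, Matrix.mul_nonsing_inv _ (hdet x), hTE1,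
          LinearMap.id_apply])
      (LinearMap.ext fun v => by
        rw [LinearMap.comp_apply, hTE, Matrix.nonsing_inv_mul _ (hdet x), hTE1,
          LinearMap.id_apply]) with heL
  set eCL : EuclideanSpace ℝ (Fin d) →
      (EuclideanSpace ℝ (Fin d) ≃L[ℝ] EuclideanSpace ℝ (Fin d)) := fun x =>
    (eL x).toContinuousLinearEquiv with heCL
  have heCL_coe : ∀ x, ((eCL x) : EuclideanSpace ℝ (Fin d) →L[ℝ] EuclideanSpace ℝ (Fin d))
      = LinearMap.toContinuousLinearMap (Matrix.toEuclideanLin (H x)) := fun x => by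
    refine ContinuousLinearMap.ext fun v => ?_
    have h1 : (eCL x) v = (eL x) v := congrFun (LinearEquiv.coe_toContinuousLinearEquiv' _) v
    simpa [heL, LinearEquiv.ofLinear_apply] using h1
  have heCL_symm : ∀ x v, (eCL x).symm v = Matrix.toEuclideanLin (H x)⁻¹ v := fun x v => by
    have h1 : (eCL x).symm v = (eL x).symm v :=
      congrFun (LinearEquiv.coe_toContinuousLinearEquiv_symm' _) v
    simpa [heL, LinearEquiv.ofLinear_symm_apply] using h1
  have hstrict : ∀ x, HasStrictFDerivAt F
      ((eCL x) : EuclideanSpace ℝ (Fin d) →L[ℝ] EuclideanSpace ℝ (Fin d)) x := fun x =>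
    hF1.contDiffAt.hasStrictFDerivAt' (by rw [heCL_coe]; exact hH x) one_ne_zero
  have hopen : IsOpen (Set.range F) :=
    (isOpenMap_of_hasStrictFDerivAt_equiv hstrict).isOpen_range
  -- the sublevel set
  set K : Set (EuclideanSpace ℝ (Fin d)) := {x | L x ≤ L θ0} with hK
  have hKcomp : IsCompact K := sublevel_compact hL.continuous hcoer (L θ0)
  have hclaim : ∀ s ∈ Set.Icc (0:ℝ) 1, ∀ x, F x = (1 - s) • g → x ∈ K := by
    intro s hs x hx
    exact sublevel_claim hconv hLd hs hx
  -- the segment is in the range of F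
  have hcont_u : Continuous (fun s : ℝ => (1 - s) • g) :=
    (continuous_const.sub continuous_id).smul continuous_const
  set C : Set ℝ := (fun s : ℝ => (1 - s) • g) ⁻¹' (F '' K) with hC
  set C' : Set ℝ := (fun s : ℝ => (1 - s) • g) ⁻¹' (Set.range F)ᶜ with hC'
  have hCcl : IsClosed C := ((hKcomp.image hF1.continuous).isClosed).preimage hcont_u
  have hC'cl : IsClosed C' := (hopen.isClosed_compl).preimage hcont_u
  have hcover : Set.Icc (0:ℝ) 1 ⊆ C ∪ C' := by
    intro s hs
    by_cases hmem : (1 - s) • g ∈ Set.range F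
    · rcases hmem with ⟨x, hx⟩
      exact Or.inl ⟨x, hclaim s hs x hx, hx⟩
    · exact Or.inr hmem
  have hθsK : θs ∈ K := by
    by_cases hθ : θ0 = θs
    · simp [hK, hθ]
    · exact (hmin θ0 hθ).le
  have h1C : (1:ℝ) ∈ C := by
    refine ⟨θs, hθsK, ?_⟩
    show F θs = (1 - 1) • g
    rw [hgrad0]
    simp
  have hICnonempty : (Set.Icc (0:ℝ) 1 ∩ C).Nonempty := ⟨1, Set.right_mem_Icc.2 zero_le_one, h1C⟩
  have hC'empty : ¬ (Set.Icc (0:ℝ) 1 ∩ C').Nonempty := by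
    intro hne
    obtain ⟨s, hsI, hsC, hsC'⟩ := isPreconnected_closed_iff.1 isPreconnected_Icc C C'
      hCcl hC'cl hcover hICnonempty hne
    exact hsC' (Set.image_subset_range F K hsC)
  have hrange : ∀ s ∈ Set.Icc (0:ℝ) 1, ∃ x, F x = (1 - s) • g := by
    intro s hs
    rcases hcover hs with h | h
    · rcases h with ⟨x, _, hx⟩
      exact ⟨x, hx⟩
    · exact absurd ⟨s, hs, h⟩ hC'empty
  -- define the path
  set γ : ℝ → EuclideanSpace ℝ (Fin d) := fun t =>
    if h : ∃ x, F x = (1 - t) • g then h.choose else θs with hγ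
  have hγeq : ∀ t x, F x = (1 - t) • g → γ t = x := by
    intro t x hx
    have hex : ∃ y, F y = (1 - t) • g := ⟨x, hx⟩
    rw [hγ]
    simp only [dif_pos hex]
    exact hFinj (hex.choose_spec.trans hx.symm)
  have hγF : ∀ t ∈ Set.Icc (0:ℝ) 1, F (γ t) = (1 - t) • g := by
    intro t ht
    rcases hrange t ht with ⟨x, hx⟩
    rw [hγeq t x hx, hx]
  have hγ0 : γ 0 = θ0 := hγeq 0 θ0 (by simp [hg, hF])
  have hγ1 : γ 1 = θs := hγeq 1 θs (by rw [hgrad0]; simp)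
  -- derivative
  have hderiv : ∀ t ∈ Set.Icc (0:ℝ) 1, HasDerivWithinAt γ
      (-(Matrix.toEuclideanLin ((H (γ t))⁻¹) g)) (Set.Icc 0 1) t := by
    intro t ht
    set x := γ t with hx
    have hFx : F x = (1 - t) • g := hγF t ht
    have hloc := (hstrict x).to_localInverse
    set ℓ := (hstrict x).localInverse F _ x with hℓ
    have hu : HasDerivAt (fun s : ℝ => (1 - s) • g) (-g) t := by
      have h := (((hasDerivAt_id t).const_sub (1:ℝ)).smul_const g)
      simpa using h
    have hloc' : HasFDerivAt ℓ
        ((eCL x).symm : EuclideanSpace ℝ (Fin d) →L[ℝ] EuclideanSpace ℝ (Fin d))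
        ((fun s : ℝ => (1 - s) • g) t) := by
      simpa [hFx] using hloc.hasFDerivAt
    have huc : HasDerivAt (fun s => ℓ ((1 - s) • g)) ((eCL x).symm (-g)) t :=
      hloc'.comp_hasDerivAt (f := fun s : ℝ => (1 - s) • g) t hu
    have hval : (eCL x).symm (-g) = -(Matrix.toEuclideanLin ((H x)⁻¹) g) := by
      rw [map_neg, heCL_symm]
    have hevF : ∀ᶠ v in 𝓝 (F x), F (ℓ v) = v := (hstrict x).eventually_right_inverse
    have hev2 : γ =ᶠ[nhdsWithin t (Set.Icc (0:ℝ) 1)] (fun s => ℓ ((1 - s) • g)) := by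
      have hpre : {s : ℝ | F (ℓ ((1 - s) • g)) = (1 - s) • g} ∈ 𝓝 t := by
        have hc : ContinuousAt (fun s : ℝ => (1 - s) • g) t := hcont_u.continuousAt
        rw [hFx] at hevF
        have h2 : {v | F (ℓ v) = v} ∈ 𝓝 ((fun s : ℝ => (1 - s) • g) t) := hevF
        exact hc.preimage_mem_nhds h2
      filter_upwards [nhdsWithin_le_nhds hpre] with s hs
      exact hγeq s _ hs
    have hγt : γ t = ℓ ((1 - t) • g) := by
      rw [← hFx, ← hx]
      exact ((hstrict x).localInverse_apply_image).symm
    have := (huc.hasDerivWithinAt (s := Set.Icc (0:ℝ) 1)).congr_of_eventuallyEq hev2 hγt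
    rwa [hval] at this
  -- smoothness
  have hud : UniqueDiffOn ℝ (Set.Icc (0:ℝ) 1) := uniqueDiffOn_Icc one_pos
  have hdiffOn : DifferentiableOn ℝ γ (Set.Icc 0 1) :=
    fun t ht => (hderiv t ht).differentiableWithinAt
  have hγcont : ContinuousOn γ (Set.Icc 0 1) := hdiffOn.continuousOn
  have hfderivF : Continuous (fderiv ℝ F) := by
    have := hF1.fderiv_right (m := 0) le_rfl
    exact this.continuous
  have hHeq : H = fun x => Matrix.toEuclideanLin.symm
      ((fderiv ℝ F x : EuclideanSpace ℝ (Fin d) →ₗ[ℝ] EuclideanSpace ℝ (Fin d))) := by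
    funext x
    rw [(hH x).fderiv]
    simp
  have hHc : Continuous H := by
    rw [hHeq]
    set φ : (EuclideanSpace ℝ (Fin d) →L[ℝ] EuclideanSpace ℝ (Fin d)) →ₗ[ℝ]
        Matrix (Fin d) (Fin d) ℝ :=
      (Matrix.toEuclideanLin.symm.toLinearMap.comp
        (ContinuousLinearMap.coeLM ℝ)) with hφ
    exact φ.continuous_of_finiteDimensional.comp hfderivF
  have hinvcont : ContinuousOn (fun t => (H (γ t))⁻¹) (Set.Icc (0:ℝ) 1) := by
    intro t ht
    have h1 : ContinuousAt (fun A : Matrix (Fin d) (Fin d) ℝ => A⁻¹) (H (γ t)) := by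
      apply continuousAt_matrix_inv
      rw [Ring.inverse_eq_inv']
      exact continuousAt_inv₀ ((hpd (γ t)).det_pos.ne')
    have h2 : ContinuousAt H (γ t) := hHc.continuousAt
    exact (h1.comp h2).comp_continuousWithinAt (hγcont t ht)
  have hψ : Continuous (fun M : Matrix (Fin d) (Fin d) ℝ => Matrix.toEuclideanLin M g) := by
    set ψ : Matrix (Fin d) (Fin d) ℝ →ₗ[ℝ] EuclideanSpace ℝ (Fin d) :=
      (LinearMap.applyₗ g).comp Matrix.toEuclideanLin.toLinearMap with hψdef
    exact ψ.continuous_of_finiteDimensional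
  have hdwcont : ContinuousOn (fun t => -(Matrix.toEuclideanLin ((H (γ t))⁻¹) g))
      (Set.Icc (0:ℝ) 1) := (hψ.comp_continuousOn hinvcont).neg
  have hcd : ContDiffOn ℝ 1 γ (Set.Icc 0 1) := by
    rw [show (1 : WithTop ℕ∞) = 0 + 1 from rfl, contDiffOn_succ_iff_derivWithin hud]
    refine ⟨hdiffOn, by simp, ?_⟩
    rw [contDiffOn_zero]
    refine ContinuousOn.congr hdwcont ?_
    intro t ht
    exact (hderiv t ht).derivWithin (hud t ht)
  exact ⟨γ, hcd, hγ0, hγ1, hderiv, fun t ht => hγF t ht⟩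
end

section
/- If either (1) L(θ) − min L ≤ μ R² / 16 or (2) ‖∇L(θ)‖₂ ≤ μ R / 4, then the Newton quadratic form satisfies ⟨∇L(θ), (∇²L(θ))⁻¹ ∇L(θ)⟩ ≤ 4 (L(θ) − min L) (Lemma 5, Quadratic Form Integration). -/
open Matrix Filter
open scoped RealInnerProductSpace

lemma aux_deriv_lb (φ' φ'' : ℝ → ℝ) (hφ' : ∀ t, HasDerivAt φ' (φ'' t) t)
    {a b m : ℝ} (hab : a ≤ b) (hm : ∀ t ∈ Set.Icc a b, m ≤ φ'' t) :
    φ' a + m * (b - a) ≤ φ' b := by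
  rcases eq_or_lt_of_le hab with h | h
  · subst h; simp
  · obtain ⟨c, hc, hceq⟩ := exists_hasDerivAt_eq_slope φ' φ'' h
      (fun x _ => (hφ' x).continuousAt.continuousWithinAt) (fun x _ => hφ' x)
    have hmc : m ≤ φ'' c := hm c ⟨hc.1.le, hc.2.le⟩
    have hba : 0 < b - a := sub_pos.mpr h
    rw [hceq, le_div_iff₀ hba] at hmc
    nlinarith

lemma aux_mono (χ χ' : ℝ → ℝ) (hχ : ∀ t, HasDerivAt χ (χ' t) t)
    {a b : ℝ} (hab : a ≤ b) (h : ∀ t ∈ Set.Icc a b, 0 ≤ χ' t) : χ a ≤ χ b := by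
  have hmono := monotoneOn_of_deriv_nonneg (convex_Icc a b)
    (fun t _ => (hχ t).continuousAt.continuousWithinAt)
    (fun t ht => (hχ t).differentiableAt.differentiableWithinAt)
    (fun t ht => by
      rw [(hχ t).deriv]
      exact h t (Set.Ioo_subset_Icc_self (by simpa [interior_Icc] using ht)))
  exact hmono ⟨le_rfl, hab⟩ ⟨hab, le_rfl⟩ hab

lemma aux_sd_lower (φ φ' φ'' : ℝ → ℝ) (hφ : ∀ t, HasDerivAt φ (φ' t) t)
    (hφ' : ∀ t, HasDerivAt φ' (φ'' t) t) {a b m : ℝ} (hab : a ≤ b)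
    (hm : ∀ t ∈ Set.Icc a b, m ≤ φ'' t) :
    φ a + φ' a * (b - a) + m * (b - a) ^ 2 / 2 ≤ φ b := by
  set χ : ℝ → ℝ := fun t => φ t - φ' a * t - m * (t - a) ^ 2 / 2 with hχdef
  have hχ : ∀ t, HasDerivAt χ (φ' t - (φ' a + m * (t - a))) t := by
    intro t
    have h1 : HasDerivAt (fun t : ℝ => φ' a * t) (φ' a) t := by
      simpa using (hasDerivAt_id t).const_mul (φ' a)
    have h2 : HasDerivAt (fun t : ℝ => m * (t - a) ^ 2 / 2) (m * (t - a)) t := by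
      have h3 : HasDerivAt (fun t : ℝ => (t - a) ^ 2) (2 * (t - a)) t := by
        simpa using ((hasDerivAt_id t).sub_const a).fun_pow 2
      exact ((h3.const_mul m).div_const 2).congr_deriv (by ring)
    exact (((hφ t).sub h1).sub h2).congr_deriv (by ring)
  have mono := aux_mono χ _ hχ hab (fun t ht => by
    have := aux_deriv_lb φ' φ'' hφ' ht.1 (fun s hs => hm s ⟨hs.1, hs.2.trans ht.2⟩)
    linarith)
  simp only [hχdef] at mono
  nlinarith [mono]

lemma aux_sd_upper (φ φ' φ'' : ℝ → ℝ) (hφ : ∀ t, HasDerivAt φ (φ' t) t)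
    (hφ' : ∀ t, HasDerivAt φ' (φ'' t) t) {a b B : ℝ} (hab : a ≤ b)
    (hm : ∀ t ∈ Set.Icc a b, φ'' t ≤ B) :
    φ b ≤ φ a + φ' a * (b - a) + B * (b - a) ^ 2 / 2 := by
  have := aux_sd_lower (fun t => -φ t) (fun t => -φ' t) (fun t => -φ'' t)
    (fun t => (hφ t).neg) (fun t => (hφ' t).neg) hab (m := -B)
    (fun t ht => neg_le_neg (hm t ht))
  nlinarith [this]

lemma aux_line1 {d : ℕ} (L : EuclideanSpace ℝ (Fin d) → ℝ) (hL : Differentiable ℝ L)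
    (p v : EuclideanSpace ℝ (Fin d)) (t : ℝ) :
    HasDerivAt (fun s : ℝ => L (p + s • v)) ⟪gradient L (p + t • v), v⟫ t := by
  have hline : HasDerivAt (fun s : ℝ => p + s • v) v t := by
    simpa using ((hasDerivAt_id t).smul_const v).const_add p
  have := ((hL (p + t • v)).hasGradientAt.hasFDerivAt).comp_hasDerivAt t hline
  simpa [InnerProductSpace.toDual_apply_apply, Function.comp_def] using this

lemma aux_line2 {d : ℕ} (L : EuclideanSpace ℝ (Fin d) → ℝ)
    (H : EuclideanSpace ℝ (Fin d) → Matrix (Fin d) (Fin d) ℝ)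
    (hH : ∀ x, HasFDerivAt (gradient L)
      (LinearMap.toContinuousLinearMap (Matrix.toEuclideanLin (H x))) x)
    (p v : EuclideanSpace ℝ (Fin d)) (t : ℝ) :
    HasDerivAt (fun s : ℝ => ⟪gradient L (p + s • v), v⟫)
      ⟪Matrix.toEuclideanLin (H (p + t • v)) v, v⟫ t := by
  have hline : HasDerivAt (fun s : ℝ => p + s • v) v t := by
    simpa using ((hasDerivAt_id t).smul_const v).const_add p
  have h1 := (hH (p + t • v)).comp_hasDerivAt t hline
  have h2 := h1.inner ℝ (hasDerivAt_const t v)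
  simpa using h2

lemma aux_qf_nonneg {d : ℕ} {A : Matrix (Fin d) (Fin d) ℝ} (hA : A.PosSemidef)
    (v : EuclideanSpace ℝ (Fin d)) : 0 ≤ hessQF A v := by
  have h := hA.dotProduct_mulVec_nonneg ((WithLp.equiv 2 (Fin d → ℝ)) v)
  rw [hessQF, EuclideanSpace.inner_eq_star_dotProduct]
  simpa [Matrix.ofLp_toEuclideanLin_apply, dotProduct_comm] using h

lemma aux_symm {d : ℕ} {A : Matrix (Fin d) (Fin d) ℝ} (hA : A.IsHermitian)
    (v w : EuclideanSpace ℝ (Fin d)) :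
    ⟪Matrix.toEuclideanLin A v, w⟫ = ⟪v, Matrix.toEuclideanLin A w⟫ :=
  (Matrix.isHermitian_iff_isSymmetric.mp hA) v w

lemma aux_inv {d : ℕ} {A : Matrix (Fin d) (Fin d) ℝ} (hA : A.PosDef)
    (g : EuclideanSpace ℝ (Fin d)) :
    Matrix.toEuclideanLin A (Matrix.toEuclideanLin A⁻¹ g) = g := by
  have hdet : IsUnit A.det := isUnit_iff_ne_zero.mpr (ne_of_gt hA.det_pos)
  have h1 : A * A⁻¹ = 1 := Matrix.mul_nonsing_inv A hdet
  apply (WithLp.equiv 2 _).injective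
  simp [Matrix.ofLp_toEuclideanLin_apply, Matrix.mulVec_mulVec, h1]

set_option maxHeartbeats 1000000 in
/-- Lemma 5 (Quadratic Form Integration) -/
theorem stmt_6 (d : ℕ) (hd : 1 ≤ d)
    (L : EuclideanSpace ℝ (Fin d) → ℝ) (hL : ContDiff ℝ 2 L)
    (hconv : StrictConvexOn ℝ Set.univ L)
    (θs : EuclideanSpace ℝ (Fin d))
    (hmin : ∀ θ, θ ≠ θs → L θs < L θ)
    (hgrad0 : gradient L θs = 0)
    (H : EuclideanSpace ℝ (Fin d) → Matrix (Fin d) (Fin d) ℝ)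
    (hH : ∀ x, HasFDerivAt (gradient L)
      (LinearMap.toContinuousLinearMap (Matrix.toEuclideanLin (H x))) x)
    (hpd : ∀ x, (H x).PosDef)
    (μ : ℝ) (hμpos : 0 < μ)
    (hμlb : ∀ v : EuclideanSpace ℝ (Fin d), μ * ‖v‖ ^ 2 ≤ hessQF (H θs) v)
    (hμeig : ∃ v : EuclideanSpace ℝ (Fin d), v ≠ 0 ∧
      Matrix.toEuclideanLin (H θs) v = μ • v)
    (R : ℝ) (hR : 0 < R)
    (hA2 : ∀ θ θ' : EuclideanSpace ℝ (Fin d), ‖θ - θ'‖ ≤ R →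
      ∀ v, (1/2) * hessQF (H θ') v ≤ hessQF (H θ) v ∧
        hessQF (H θ) v ≤ 2 * hessQF (H θ') v)
    (θ : EuclideanSpace ℝ (Fin d))
    (hcond : L θ - L θs ≤ μ * R ^ 2 / 16 ∨ ‖gradient L θ‖ ≤ μ * R / 4) :
    ⟪gradient L θ, Matrix.toEuclideanLin ((H θ)⁻¹) (gradient L θ)⟫ ≤
      4 * (L θ - L θs) := by
  have hLdiff : Differentiable ℝ L := hL.differentiable (by norm_num)
  have hLmin : ∀ x, L θs ≤ L x := by
    intro x
    rcases eq_or_ne x θs with h | h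
    · simp [h]
    · exact (hmin x h).le
  have hqf0 : ∀ x v, 0 ≤ hessQF (H x) v := fun x v => aux_qf_nonneg (hpd x).posSemidef v
  set g := gradient L θ with hg
  -- Step A : ‖θ - θs‖ ≤ R
  have hδR : ‖θ - θs‖ ≤ R := by
    by_contra hgt
    push_neg at hgt
    set s := ‖θ - θs‖ with hs
    have hs0 : 0 < s := hR.trans hgt
    have hδ0 : θ - θs ≠ 0 := by
      intro h; rw [hs, h, norm_zero] at hs0; exact lt_irrefl _ hs0
    set e : EuclideanSpace ℝ (Fin d) := s⁻¹ • (θ - θs) with he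
    have hnorme : ‖e‖ = 1 := norm_smul_inv_norm hδ0
    have hse : θs + s • e = θ := by
      rw [he, smul_smul, mul_inv_cancel₀ (ne_of_gt hs0), one_smul]
      abel
    set φ' : ℝ → ℝ := fun t => ⟪gradient L (θs + t • e), e⟫ with hφ'def
    set φ'' : ℝ → ℝ := fun t => ⟪Matrix.toEuclideanLin (H (θs + t • e)) e, e⟫ with hφ''def
    have hφd : ∀ t, HasDerivAt (fun r : ℝ => L (θs + r • e)) (φ' t) t :=
      fun t => aux_line1 L hLdiff θs e t
    have hφ'd : ∀ t, HasDerivAt φ' (φ'' t) t := fun t => aux_line2 L H hH θs e t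
    have hφ''qf : ∀ t, φ'' t = hessQF (H (θs + t • e)) e := by
      intro t; rw [hφ''def, hessQF]; exact real_inner_comm _ _
    have hφ''0 : ∀ t, 0 ≤ φ'' t := fun t => (hφ''qf t) ▸ hqf0 _ e
    have hμe : μ ≤ hessQF (H θs) e := by
      have := hμlb e; rwa [hnorme, one_pow, mul_one] at this
    have hφ''m : ∀ t ∈ Set.Icc (0:ℝ) R, μ / 2 ≤ φ'' t := by
      intro t ht
      have hdist : ‖(θs + t • e) - θs‖ ≤ R := by
        rw [add_sub_cancel_left, norm_smul, hnorme, mul_one, Real.norm_eq_abs,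
          abs_of_nonneg ht.1]
        exact ht.2
      have h1 := (hA2 _ θs hdist e).1
      rw [hφ''qf]
      linarith
    have hφ'0 : φ' 0 = 0 := by
      rw [hφ'def]; simp [hgrad0]
    have hφ'R : μ * R / 2 ≤ φ' R := by
      have := aux_deriv_lb φ' φ'' hφ'd hR.le hφ''m
      rw [hφ'0] at this
      linarith
    have hφ'mono : φ' R ≤ φ' s := by
      have := aux_deriv_lb φ' φ'' hφ'd hgt.le (m := 0) (fun t _ => hφ''0 t)
      linarith
    rcases hcond with h1 | h2
    · -- L θ - L θs > μ R² / 16 : contradiction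
      have hLR : L θs + μ / 2 * R ^ 2 / 2 ≤ L (θs + R • e) := by
        have := aux_sd_lower (fun r : ℝ => L (θs + r • e)) φ' φ'' hφd hφ'd hR.le hφ''m
        rw [hφ'0] at this
        simp only [zero_smul, add_zero, zero_mul, sub_zero] at this
        linarith
      have hsupport : L (θs + R • e) + φ' R * (s - R) ≤ L θ := by
        have := aux_sd_lower (fun r : ℝ => L (θs + r • e)) φ' φ'' hφd hφ'd hgt.le
          (m := 0) (fun t _ => hφ''0 t)
        simp only [hse] at this
        linarith
      have hnn : 0 ≤ φ' R * (s - R) := by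
        apply mul_nonneg (by nlinarith) (by linarith)
      nlinarith [mul_pos hμpos (pow_pos hR 2)]
    · -- ‖g‖ ≤ μ R / 4 : contradiction
      have hφ's : φ' s = ⟪g, e⟫ := by rw [hφ'def]; simp [hse, hg]
      have hle : ⟪g, e⟫ ≤ ‖g‖ := by
        have := real_inner_le_norm g e
        rwa [hnorme, mul_one] at this
      rw [hφ's] at hφ'mono
      have hμR : 0 < μ * R := mul_pos hμpos hR
      linarith
  -- now within the ball
  have hθlb : ∀ v, μ / 2 * ‖v‖ ^ 2 ≤ hessQF (H θ) v := by
    intro v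
    have h1 := (hA2 θ θs hδR v).1
    have h2 := hμlb v
    linarith
  rcases eq_or_ne g 0 with hg0 | hg0
  · rw [hg0]
    simp only [inner_zero_left]
    have := hLmin θ
    linarith
  set u : EuclideanSpace ℝ (Fin d) := Matrix.toEuclideanLin ((H θ)⁻¹) g with hu
  have hHu : Matrix.toEuclideanLin (H θ) u = g := aux_inv (hpd θ) g
  show ⟪g, u⟫ ≤ 4 * (L θ - L θs)
  set lam : ℝ := ⟪g, u⟫ with hlam
  have hlam_qf : lam = hessQF (H θ) u := by
    rw [hlam, hessQF, ← hHu, aux_symm (hpd θ).1]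
  have hlam_lb : μ / 2 * ‖u‖ ^ 2 ≤ lam := by rw [hlam_qf]; exact hθlb u
  have hlam0 : 0 ≤ lam := le_trans (by positivity) hlam_lb
  have hu0 : u ≠ 0 := by
    intro h
    apply hg0
    rw [← hHu, h, map_zero]
  have hun : 0 < ‖u‖ := norm_pos_iff.mpr hu0
  -- Taylor upper bound step
  have hstep : ∀ w : EuclideanSpace ℝ (Fin d), ‖w‖ ≤ R →
      L (θ + w) ≤ L θ + ⟪g, w⟫ + hessQF (H θ) w := by
    intro w hw
    set ψ' : ℝ → ℝ := fun t => ⟪gradient L (θ + t • w), w⟫ with hψ'def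
    set ψ'' : ℝ → ℝ := fun t => ⟪Matrix.toEuclideanLin (H (θ + t • w)) w, w⟫ with hψ''def
    have h1 : ∀ t, HasDerivAt (fun r : ℝ => L (θ + r • w)) (ψ' t) t :=
      fun t => aux_line1 L hLdiff θ w t
    have h2 : ∀ t, HasDerivAt ψ' (ψ'' t) t := fun t => aux_line2 L H hH θ w t
    have hub : ∀ t ∈ Set.Icc (0:ℝ) 1, ψ'' t ≤ 2 * hessQF (H θ) w := by
      intro t ht
      have hd : ‖(θ + t • w) - θ‖ ≤ R := by
        rw [add_sub_cancel_left, norm_smul, Real.norm_eq_abs, abs_of_nonneg ht.1]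
        calc t * ‖w‖ ≤ 1 * ‖w‖ := by
              apply mul_le_mul_of_nonneg_right ht.2 (norm_nonneg w)
          _ ≤ R := by rwa [one_mul]
      have := (hA2 _ θ hd w).2
      have heq : ψ'' t = hessQF (H (θ + t • w)) w := by
        rw [hψ''def, hessQF]; exact real_inner_comm _ _
      rw [heq]
      linarith
    have := aux_sd_upper (fun r : ℝ => L (θ + r • w)) ψ' ψ'' h1 h2 zero_le_one hub
    have hψ'0 : ψ' 0 = ⟪g, w⟫ := by rw [hψ'def]; simp [hg]
    rw [hψ'0] at this
    simp only [one_smul, zero_smul, add_zero] at this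
    linarith
  have hscale : ∀ c : ℝ, hessQF (H θ) (c • u) = c ^ 2 * lam := by
    intro c
    rw [hlam_qf]
    simp only [hessQF, LinearMap.map_smul, real_inner_smul_left, real_inner_smul_right]
    ring
  have hgw : ∀ c : ℝ, ⟪g, c • u⟫ = c * lam := by
    intro c; rw [hlam, real_inner_smul_right]
  by_cases huR : ‖u‖ ≤ R
  · -- main case
    have hwR : ‖(-(1/2) : ℝ) • u‖ ≤ R := by
      rw [norm_smul, Real.norm_eq_abs]
      have : |(-(1/2) : ℝ)| = 1/2 := by norm_num
      rw [this]
      linarith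
    have hLs := hstep _ hwR
    rw [hgw, hscale] at hLs
    have hLm := hLmin (θ + (-(1/2) : ℝ) • u)
    nlinarith
  · push_neg at huR
    exfalso
    rcases hcond with h1 | h2
    · set t₀ : ℝ := R / (2 * ‖u‖) with ht₀def
      have ht₀pos : 0 < t₀ := by positivity
      have ht₀u : t₀ * ‖u‖ = R / 2 := by
        rw [ht₀def]; field_simp
      have ht₀lt : t₀ ≤ 1 / 2 := by
        rw [ht₀def, div_le_div_iff₀ (by positivity) (by norm_num)]
        nlinarith
      have hwR : ‖(-t₀ : ℝ) • u‖ ≤ R := by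
        rw [norm_smul, Real.norm_eq_abs, abs_neg, abs_of_pos ht₀pos, ht₀u]
        linarith
      have hLs := hstep _ hwR
      rw [hgw, hscale] at hLs
      have hLm := hLmin (θ + (-t₀ : ℝ) • u)
      -- L θ - L θs ≥ t₀ lam (1 - t₀) ≥ t₀ lam / 2
      have hkey : t₀ * lam / 2 ≤ L θ - L θs := by
        nlinarith [mul_le_mul_of_nonneg_right ht₀lt (mul_nonneg ht₀pos.le hlam0)]
      -- multiply by ‖u‖ : R lam / 4 ≤ (μ R²/16) ‖u‖
      have hmul := mul_le_mul_of_nonneg_right (hkey.trans h1) (le_of_lt hun)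
      have hc : t₀ * ‖u‖ * lam = R / 2 * lam := by rw [ht₀u]
      have h3 : R * lam / 4 ≤ μ * R ^ 2 / 16 * ‖u‖ := by nlinarith [hmul, hc]
      have h4 : μ / 2 * ‖u‖ ^ 2 * (R / 4) ≤ μ * R ^ 2 / 16 * ‖u‖ := by
        nlinarith [mul_le_mul_of_nonneg_right hlam_lb (by positivity : (0:ℝ) ≤ R / 4), h3]
      nlinarith [h4, mul_lt_mul_of_pos_left huR (by positivity : (0:ℝ) < μ * R * ‖u‖ / 8)]
    · have hcs : lam ≤ ‖g‖ * ‖u‖ := real_inner_le_norm g u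
      have h5 : ‖g‖ * ‖u‖ ≤ μ * R / 4 * ‖u‖ := mul_le_mul_of_nonneg_right h2 hun.le
      nlinarith [hcs, h5, hlam_lb,
        mul_lt_mul_of_pos_left huR (by positivity : (0:ℝ) < μ * ‖u‖ / 2),
        mul_pos (mul_pos hμpos hR) hun]
end

section
/- If either (1) L(θ) − min L ≤ μ R² / 4 or (2) ‖∇L(θ)‖₂ ≤ μ R / 2, then L(θ) − min L ≤ (1/μ) ‖∇L(θ)‖₂² (Lemma 6, Gradient and Loss Bound). -/
open Matrix Filter
open scoped RealInnerProductSpace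

set_option maxHeartbeats 2000000 in
/-- Lemma 6 (Gradient and Loss Bound) -/
theorem stmt_7 (d : ℕ) (hd : 1 ≤ d)
    (L : EuclideanSpace ℝ (Fin d) → ℝ) (hL : ContDiff ℝ 2 L)
    (hconv : StrictConvexOn ℝ Set.univ L)
    (θs : EuclideanSpace ℝ (Fin d))
    (hmin : ∀ θ, θ ≠ θs → L θs < L θ)
    (hgrad0 : gradient L θs = 0)
    (H : EuclideanSpace ℝ (Fin d) → Matrix (Fin d) (Fin d) ℝ)
    (hH : ∀ x, HasFDerivAt (gradient L)
      (LinearMap.toContinuousLinearMap (Matrix.toEuclideanLin (H x))) x)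
    (hpd : ∀ x, (H x).PosDef)
    (μ : ℝ) (hμpos : 0 < μ)
    (hμlb : ∀ v : EuclideanSpace ℝ (Fin d), μ * ‖v‖ ^ 2 ≤ hessQF (H θs) v)
    (hμeig : ∃ v : EuclideanSpace ℝ (Fin d), v ≠ 0 ∧
      Matrix.toEuclideanLin (H θs) v = μ • v)
    (R : ℝ) (hR : 0 < R)
    (hA2 : ∀ θ θ' : EuclideanSpace ℝ (Fin d), ‖θ - θ'‖ ≤ R →
      ∀ v, (1/2) * hessQF (H θ') v ≤ hessQF (H θ) v ∧
        hessQF (H θ) v ≤ 2 * hessQF (H θ') v)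
    (θ : EuclideanSpace ℝ (Fin d))
    (hcond : L θ - L θs ≤ μ * R ^ 2 / 4 ∨ ‖gradient L θ‖ ≤ μ * R / 2) :
    L θ - L θs ≤ (1 / μ) * ‖gradient L θ‖ ^ 2 := by
  classical
  have hLd : Differentiable ℝ L := hL.differentiable two_ne_zero
  -- derivative of a line
  have hline : ∀ (a v : EuclideanSpace ℝ (Fin d)) (t : ℝ),
      HasDerivAt (fun s : ℝ => a + s • v) v t := fun a v t => by
    simpa using ((hasDerivAt_id t).smul_const v).const_add a
  -- derivative of L along a line
  have hderivL : ∀ (a v : EuclideanSpace ℝ (Fin d)) (t : ℝ),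
      HasDerivAt (fun s : ℝ => L (a + s • v)) ⟪gradient L (a + t • v), v⟫ t := fun a v t => by
    have h := ((hLd (a + t • v)).hasGradientAt.hasFDerivAt).comp_hasDerivAt t (hline a v t)
    rw [InnerProductSpace.toDual_apply_apply] at h
    exact h
  -- derivative of the directional derivative along a line
  have hderivf : ∀ (a v : EuclideanSpace ℝ (Fin d)) (t : ℝ),
      HasDerivAt (fun s : ℝ => ⟪gradient L (a + s • v), v⟫)
        (hessQF (H (a + t • v)) v) t := fun a v t => by
    have h3 := HasDerivAt.inner ℝ ((hH (a + t • v)).comp_hasDerivAt t (hline a v t))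
      (hasDerivAt_const t v)
    have he : hessQF (H (a + t • v)) v
        = ⟪gradient L (a + t • v), (0 : EuclideanSpace ℝ (Fin d))⟫
          + ⟪(LinearMap.toContinuousLinearMap (Matrix.toEuclideanLin (H (a + t • v)))) v, v⟫ := by
      simp [hessQF, real_inner_comm, mul_comm]
    rw [he]; exact h3
  -- positivity of the Hessian quadratic forms
  have hQnn : ∀ x v, 0 ≤ hessQF (H x) v := fun x v => by
    have h := (posSemidef_iff_dotProduct_mulVec.mp (hpd x).posSemidef).2 ((WithLp.equiv 2 _) v)
    simpa [hessQF, PiLp.inner_apply, dotProduct, Matrix.toEuclideanLin_apply, mul_comm] using h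
  have hQpos : ∀ x (v : EuclideanSpace ℝ (Fin d)), v ≠ 0 → 0 < hessQF (H x) v := fun x v hv => by
    have h := (posDef_iff_dotProduct_mulVec.mp (hpd x)).2 (x := (WithLp.equiv 2 _) v) (by simpa using hv)
    simpa [hessQF, PiLp.inner_apply, dotProduct, Matrix.toEuclideanLin_apply, mul_comm] using h
  -- gradient increment bound along segments staying within distance R of θs
  have hG' : ∀ (a v : EuclideanSpace ℝ (Fin d)),
      (∀ t ∈ Set.Icc (0:ℝ) 1, ‖a + t • v - θs‖ ≤ R) →
      μ / 2 * ‖v‖ ^ 2 ≤ ⟪gradient L (a + v), v⟫ - ⟪gradient L a, v⟫ := by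
    intro a v hseg
    have hφd : ∀ t, HasDerivAt (fun t : ℝ => ⟪gradient L (a + t • v), v⟫ - t * (μ / 2 * ‖v‖ ^ 2))
        (hessQF (H (a + t • v)) v - μ / 2 * ‖v‖ ^ 2) t := fun t =>
      (hderivf a v t).sub (hasDerivAt_mul_const _)
    have hmono : MonotoneOn (fun t : ℝ => ⟪gradient L (a + t • v), v⟫ - t * (μ / 2 * ‖v‖ ^ 2))
        (Set.Icc (0:ℝ) 1) := by
      refine monotoneOn_of_hasDerivWithinAt_nonneg (convex_Icc 0 1)
        (fun t _ => (hφd t).continuousAt.continuousWithinAt)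
        (fun t _ => (hφd t).hasDerivWithinAt) ?_
      intro t ht
      rw [interior_Icc] at ht
      have hmem : ‖(a + t • v) - θs‖ ≤ R := hseg t ⟨ht.1.le, ht.2.le⟩
      have h1 := (hA2 (a + t • v) θs hmem v).1
      have h2 := hμlb v
      simp only [sub_nonneg]
      linarith
    have h01 := hmono (Set.left_mem_Icc.2 zero_le_one) (Set.right_mem_Icc.2 zero_le_one) zero_le_one
    simp only [zero_smul, add_zero, one_smul, zero_mul, one_mul, sub_zero] at h01
    linarith
  -- scaled version
  have hGt' : ∀ (a v : EuclideanSpace ℝ (Fin d)),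
      (∀ t ∈ Set.Icc (0:ℝ) 1, ‖a + t • v - θs‖ ≤ R) →
      ∀ t ∈ Set.Icc (0:ℝ) 1,
        μ / 2 * t * ‖v‖ ^ 2 ≤ ⟪gradient L (a + t • v), v⟫ - ⟪gradient L a, v⟫ := by
    intro a v hseg t ht
    rcases eq_or_lt_of_le ht.1 with h0 | h0
    · simp [← h0]
    · have hseg' : ∀ s ∈ Set.Icc (0:ℝ) 1, ‖a + s • (t • v) - θs‖ ≤ R := by
        intro s hs
        rw [smul_smul]
        exact hseg (s * t) ⟨mul_nonneg hs.1 h0.le, by nlinarith [hs.1, hs.2, ht.2]⟩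
      have h := hG' a (t • v) hseg'
      rw [real_inner_smul_right, real_inner_smul_right, norm_smul, Real.norm_eq_abs,
        abs_of_pos h0] at h
      nlinarith [h, h0]
  -- loss comparison along segments staying in the ball
  have hLoss : ∀ (a v : EuclideanSpace ℝ (Fin d)),
      (∀ t ∈ Set.Icc (0:ℝ) 1, ‖a + t • v - θs‖ ≤ R) →
      L a + ⟪gradient L a, v⟫ + μ / 4 * ‖v‖ ^ 2 ≤ L (a + v) := by
    intro a v hseg
    have hφd : ∀ t, HasDerivAt
        (fun t : ℝ => L (a + t • v) - t * ⟪gradient L a, v⟫ - t ^ 2 * (μ / 4 * ‖v‖ ^ 2))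
        (⟪gradient L (a + t • v), v⟫ - ⟪gradient L a, v⟫ - 2 * t * (μ / 4 * ‖v‖ ^ 2)) t := by
      intro t
      have h3 : HasDerivAt (fun s : ℝ => s ^ 2 * (μ / 4 * ‖v‖ ^ 2))
          (2 * t * (μ / 4 * ‖v‖ ^ 2)) t := by
        simpa using (hasDerivAt_pow 2 t).mul_const (μ / 4 * ‖v‖ ^ 2)
      exact ((hderivL a v t).sub (hasDerivAt_mul_const _)).sub h3
    have hmono : MonotoneOn
        (fun t : ℝ => L (a + t • v) - t * ⟪gradient L a, v⟫ - t ^ 2 * (μ / 4 * ‖v‖ ^ 2))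
        (Set.Icc (0:ℝ) 1) := by
      refine monotoneOn_of_hasDerivWithinAt_nonneg (convex_Icc 0 1)
        (fun t _ => (hφd t).continuousAt.continuousWithinAt)
        (fun t _ => (hφd t).hasDerivWithinAt) ?_
      intro t ht
      rw [interior_Icc] at ht
      have h := hGt' a v hseg t ⟨ht.1.le, ht.2.le⟩
      nlinarith [h]
    have h01 := hmono (Set.left_mem_Icc.2 zero_le_one) (Set.right_mem_Icc.2 zero_le_one) zero_le_one
    simp only [zero_smul, add_zero, one_smul, zero_mul, one_mul, one_pow, sub_zero,
      ne_eq, OfNat.ofNat_ne_zero, not_false_eq_true, zero_pow] at h01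
    linarith
  rcases le_or_gt (‖θ - θs‖) R with hball | hout
  · -- in-ball case : PL-type inequality
    have hseg : ∀ t ∈ Set.Icc (0:ℝ) 1, ‖θ + t • (θs - θ) - θs‖ ≤ R := by
      intro t ht
      have he : θ + t • (θs - θ) - θs = (1 - t) • (θ - θs) := by module
      rw [he, norm_smul, Real.norm_eq_abs]
      have h1 : |1 - t| ≤ 1 := by rw [abs_le]; constructor <;> linarith [ht.1, ht.2]
      nlinarith [norm_nonneg (θ - θs), h1]
    have h := hLoss θ (θs - θ) hseg
    have hpt : θ + (θs - θ) = θs := by module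
    rw [hpt] at h
    have hnorm : ‖θs - θ‖ = ‖θ - θs‖ := norm_sub_rev _ _
    have hin : ⟪gradient L θ, θs - θ⟫ = -⟪gradient L θ, θ - θs⟫ := by
      rw [← neg_sub θ θs, inner_neg_right]
    rw [hnorm, hin] at h
    have hip : ⟪gradient L θ, θ - θs⟫ ≤ ‖gradient L θ‖ * ‖θ - θs‖ := real_inner_le_norm _ _
    rw [one_div, inv_mul_eq_div, le_div_iff₀ hμpos]
    nlinarith [sq_nonneg (μ * ‖θ - θs‖ - 2 * ‖gradient L θ‖), norm_nonneg (θ - θs),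
      norm_nonneg (gradient L θ), h, hip, hμpos]
  · -- out-of-ball : derive a contradiction
    exfalso
    have hrpos : 0 < ‖θ - θs‖ := lt_trans hR hout
    have hwne : θ - θs ≠ 0 := by
      intro h0; rw [h0, norm_zero] at hrpos; exact lt_irrefl _ hrpos
    set r := ‖θ - θs‖ with hr
    set w := θ - θs with hw
    set t₀ := R / r with ht₀
    have ht₀pos : 0 < t₀ := div_pos hR hrpos
    have ht₀lt : t₀ < 1 := (div_lt_one hrpos).2 hout
    have hRt : t₀ * r = R := div_mul_cancel₀ R hrpos.ne'
    have hψd : ∀ t, HasDerivAt (fun t : ℝ => ⟪gradient L (θs + t • w), w⟫)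
        (hessQF (H (θs + t • w)) w) t := hderivf θs w
    -- segment to the boundary point stays in the ball
    have hsegb : ∀ s ∈ Set.Icc (0:ℝ) 1, ‖θs + s • (t₀ • w) - θs‖ ≤ R := by
      intro s hs
      rw [add_sub_cancel_left, smul_smul, norm_smul, Real.norm_eq_abs,
        abs_of_nonneg (mul_nonneg hs.1 ht₀pos.le)]
      calc s * t₀ * r ≤ 1 * t₀ * r := by
            have := mul_le_mul_of_nonneg_right (mul_le_mul_of_nonneg_right hs.2 ht₀pos.le)
              hrpos.le
            simpa using this
        _ = R := by rw [one_mul]; exact hRt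
    -- gradient at the boundary point
    have hψt₀ : μ / 2 * R * r ≤ ⟪gradient L (θs + t₀ • w), w⟫ := by
      have h := hG' θs (t₀ • w) hsegb
      rw [hgrad0, inner_zero_left, sub_zero, real_inner_smul_right, norm_smul,
        Real.norm_eq_abs, abs_of_pos ht₀pos, ← hr] at h
      have e : μ / 2 * (t₀ * r) ^ 2 = t₀ * (μ / 2 * R * r) := by rw [← hRt]; ring
      rw [e] at h
      exact le_of_mul_le_mul_left h ht₀pos
    rcases hcond with h1 | h2
    · -- loss condition
      -- loss at the boundary point
      have hKb : L θs + μ / 4 * R ^ 2 ≤ L (θs + t₀ • w) := by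
        have h := hLoss θs (t₀ • w) hsegb
        rw [hgrad0, inner_zero_left, norm_smul, Real.norm_eq_abs, abs_of_pos ht₀pos, ← hr] at h
        have e2 : μ / 4 * (t₀ * r) ^ 2 = μ / 4 * R ^ 2 := by rw [hRt]
        linarith [h]
      -- beyond the boundary the loss keeps growing at least at the boundary slope
      have hψmono : Monotone (fun t : ℝ => ⟪gradient L (θs + t • w), w⟫) :=
        monotone_of_deriv_nonneg (fun t => (hψd t).differentiableAt)
          (fun t => by rw [(hψd t).deriv]; exact hQnn _ _)
      have hφd : ∀ t, HasDerivAt (fun t : ℝ => L (θs + t • w) - t * ⟪gradient L (θs + t₀ • w), w⟫)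
          (⟪gradient L (θs + t • w), w⟫ - ⟪gradient L (θs + t₀ • w), w⟫) t := fun t =>
        (hderivL θs w t).sub (hasDerivAt_mul_const _)
      have hmono2 : MonotoneOn
          (fun t : ℝ => L (θs + t • w) - t * ⟪gradient L (θs + t₀ • w), w⟫)
          (Set.Icc t₀ 1) := by
        refine monotoneOn_of_hasDerivWithinAt_nonneg (convex_Icc _ _)
          (fun t _ => (hφd t).continuousAt.continuousWithinAt)
          (fun t _ => (hφd t).hasDerivWithinAt) ?_
        intro t ht
        rw [interior_Icc] at ht
        have := hψmono ht.1.le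
        simp only [sub_nonneg]
        exact this
      have h01 := hmono2 (Set.left_mem_Icc.2 ht₀lt.le) (Set.right_mem_Icc.2 ht₀lt.le) ht₀lt.le
      simp only [one_smul, one_mul] at h01
      have hθ : θs + w = θ := by rw [hw]; module
      rw [hθ] at h01
      -- combine
      have hpos : 0 < (μ / 2 * R * r) * (1 - t₀) := by
        apply mul_pos (by positivity) (by linarith)
      have hstep : (μ / 2 * R * r) * (1 - t₀) ≤ ⟪gradient L (θs + t₀ • w), w⟫ * (1 - t₀) :=
        mul_le_mul_of_nonneg_right hψt₀ (by linarith)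
      have hRr : μ * R ^ 2 / 4 < μ / 4 * R ^ 2 + (μ / 2 * R * r) * (1 - t₀) := by
        nlinarith [hpos]
      nlinarith [h01, hKb, hstep, h1, hRr]
    · -- gradient condition
      have hψsm : StrictMono (fun t : ℝ => ⟪gradient L (θs + t • w), w⟫) :=
        strictMono_of_deriv_pos (fun t => by rw [(hψd t).deriv]; exact hQpos _ _ hwne)
      have hlt := hψsm ht₀lt
      simp only [one_smul] at hlt
      have hθ : θs + w = θ := by rw [hw]; module
      rw [hθ] at hlt
      have hub : ⟪gradient L θ, w⟫ ≤ ‖gradient L θ‖ * r := by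
        have := real_inner_le_norm (gradient L θ) w
        rw [← hr] at this
        exact this
      nlinarith [hψt₀, hlt, hub, h2, hrpos]
end

section
/- If either (1) L(θ) − min L ≤ μ R² / 16 or (2) ‖∇L(θ)‖₂ ≤ μ R / 4, then the Newton step is bounded by ‖(∇²L(θ))⁻¹ ∇L(θ)‖₂² ≤ 8 (L(θ) − min L) / μ (Lemma 7, Norm Bound on Inverse Hessian and Gradient Product). -/
open Matrix Filter
open scoped RealInnerProductSpace

variable {d : ℕ}

lemma hessQF_nonneg {A : Matrix (Fin d) (Fin d) ℝ} (hA : A.PosSemidef)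
    (v : EuclideanSpace ℝ (Fin d)) : 0 ≤ hessQF A v := by
  have h := (Matrix.posSemidef_iff_dotProduct_mulVec.mp hA).2 (⇑v)
  simpa [hessQF, Matrix.toEuclideanLin_apply, PiLp.inner_apply, RCLike.inner_apply,
    dotProduct, starRingEnd_apply, mul_comm] using h

lemma hessQF_smul {A : Matrix (Fin d) (Fin d) ℝ} (s : ℝ) (v : EuclideanSpace ℝ (Fin d)) :
    hessQF A (s • v) = s ^ 2 * hessQF A v := by
  simp only [hessQF, _root_.map_smul, real_inner_smul_left, real_inner_smul_right]
  ring

lemma hessQF_cs {A : Matrix (Fin d) (Fin d) ℝ} (hA : A.PosSemidef)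
    (x y : EuclideanSpace ℝ (Fin d)) :
    ⟪x, Matrix.toEuclideanLin A y⟫ ^ 2 ≤ hessQF A x * hessQF A y := by
  have hsymm : ∀ a b : EuclideanSpace ℝ (Fin d),
      ⟪Matrix.toEuclideanLin A a, b⟫ = ⟪a, Matrix.toEuclideanLin A b⟫ :=
    (Matrix.isHermitian_iff_isSymmetric.mp hA.1)
  have key : ∀ t : ℝ, 0 ≤ hessQF A y * (t * t) + (2 * ⟪x, Matrix.toEuclideanLin A y⟫) * t
      + hessQF A x := by
    intro t
    have h0 := hessQF_nonneg hA (x + t • y)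
    simp only [hessQF, map_add, _root_.map_smul, inner_add_left, inner_add_right,
      real_inner_smul_left, real_inner_smul_right] at h0 ⊢
    have e : ⟪y, Matrix.toEuclideanLin A x⟫ = ⟪x, Matrix.toEuclideanLin A y⟫ := by
      rw [← hsymm y x, real_inner_comm]
    have h2 : t * ⟪y, Matrix.toEuclideanLin A x⟫ = t * ⟪x, Matrix.toEuclideanLin A y⟫ := by
      rw [e]
    linarith [h0, h2]
  have hd := discrim_le_zero key
  simp only [discrim] at hd
  nlinarith

lemma toEuclideanLin_inv_cancel {A : Matrix (Fin d) (Fin d) ℝ} (hA : A.PosDef)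
    (g : EuclideanSpace ℝ (Fin d)) :
    Matrix.toEuclideanLin A (Matrix.toEuclideanLin A⁻¹ g) = g := by
  have hdet : IsUnit A.det := isUnit_iff_ne_zero.mpr hA.det_pos.ne'
  have : A * A⁻¹ = 1 := Matrix.mul_nonsing_inv A hdet
  rw [Matrix.toEuclideanLin_apply, Matrix.toEuclideanLin_apply]
  simp [Matrix.mulVec_mulVec, this]

lemma incr_le {f f' : ℝ → ℝ} (hf : ∀ t, HasDerivAt f (f' t) t) {c : ℝ}
    (hc : ∀ t ∈ Set.Icc (0:ℝ) 1, c ≤ f' t) :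
    ∀ t ∈ Set.Icc (0:ℝ) 1, f 0 + c * t ≤ f t := by
  intro t ht
  have hfc : Continuous f := Differentiable.continuous (fun s => (hf s).differentiableAt)
  have mono : MonotoneOn (fun s => f s - c * s) (Set.Icc 0 1) := by
    apply monotoneOn_of_hasDerivWithinAt_nonneg (f' := fun s => f' s - c) (convex_Icc 0 1)
    · exact (hfc.sub (continuous_const.mul continuous_id)).continuousOn
    · intro s _
      exact (((hf s).sub ((hasDerivAt_id' s).const_mul c)).congr_deriv (by ring) :
        HasDerivAt (fun s => f s - c * s) (f' s - c) s).hasDerivWithinAt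
    · intro s hs
      rw [interior_Icc] at hs
      have := hc s (Set.Ioo_subset_Icc_self hs)
      linarith
  have := mono (Set.left_mem_Icc.mpr zero_le_one) ht ht.1
  simp only at this
  linarith

/-- f t ≤ f 0 + C*t on [0,1] when f' ≤ C there. -/
lemma decr_le {f f' : ℝ → ℝ} (hf : ∀ t, HasDerivAt f (f' t) t) {C : ℝ}
    (hC : ∀ t ∈ Set.Icc (0:ℝ) 1, f' t ≤ C) :
    ∀ t ∈ Set.Icc (0:ℝ) 1, f t ≤ f 0 + C * t := by
  intro t ht
  have := incr_le (f := fun s => -f s) (f' := fun s => -f' s)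
    (fun s => (hf s).neg) (c := -C) (fun s hs => by simpa using hC s hs) t ht
  simp only [neg_add, neg_mul] at this
  linarith

section
variable {d : ℕ} {L : EuclideanSpace ℝ (Fin d) → ℝ}
  {H : EuclideanSpace ℝ (Fin d) → Matrix (Fin d) (Fin d) ℝ}

lemma line_hasDerivAt (a v : EuclideanSpace ℝ (Fin d)) (t : ℝ) :
    HasDerivAt (fun s : ℝ => a + s • v) v t := by
  simpa using ((hasDerivAt_id t).smul_const v).const_add a

lemma grad_line (hH : ∀ x, HasFDerivAt (gradient L)
      (LinearMap.toContinuousLinearMap (Matrix.toEuclideanLin (H x))) x)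
    (a v : EuclideanSpace ℝ (Fin d)) (t : ℝ) :
    HasDerivAt (fun s : ℝ => gradient L (a + s • v))
      (Matrix.toEuclideanLin (H (a + t • v)) v) t := by
  have h := (hH (a + t • v)).comp_hasDerivAt t (line_hasDerivAt a v t)
  simpa [Function.comp_def] using h

lemma inner_grad_hasDerivAt (hH : ∀ x, HasFDerivAt (gradient L)
      (LinearMap.toContinuousLinearMap (Matrix.toEuclideanLin (H x))) x)
    (a v u : EuclideanSpace ℝ (Fin d)) (t : ℝ) :
    HasDerivAt (fun s : ℝ => ⟪gradient L (a + s • v), u⟫)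
      ⟪Matrix.toEuclideanLin (H (a + t • v)) v, u⟫ t := by
  have h := HasDerivAt.inner ℝ (grad_line hH a v t) (hasDerivAt_const t u)
  simpa using h

lemma L_line (hdiff : ∀ x, HasGradientAt L (gradient L x) x)
    (a v : EuclideanSpace ℝ (Fin d)) (t : ℝ) :
    HasDerivAt (fun s : ℝ => L (a + s • v)) ⟪gradient L (a + t • v), v⟫ t := by
  have h := ((hdiff (a + t • v)).hasFDerivAt).comp_hasDerivAt t (line_hasDerivAt a v t)
  simpa [InnerProductSpace.toDual_apply_apply, Function.comp_def] using h
lemma psi_hasDerivAt (hH : ∀ x, HasFDerivAt (gradient L)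
      (LinearMap.toContinuousLinearMap (Matrix.toEuclideanLin (H x))) x)
    (a v : EuclideanSpace ℝ (Fin d)) (t : ℝ) :
    HasDerivAt (fun s : ℝ => ⟪gradient L (a + s • v), v⟫)
      (hessQF (H (a + t • v)) v) t := by
  have h := inner_grad_hasDerivAt hH a v v t
  have e : ⟪Matrix.toEuclideanLin (H (a + t • v)) v, v⟫ = hessQF (H (a + t • v)) v :=
    real_inner_comm _ _
  rwa [e] at h

lemma psi_lower (hH : ∀ x, HasFDerivAt (gradient L)
      (LinearMap.toContinuousLinearMap (Matrix.toEuclideanLin (H x))) x)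
    (a v : EuclideanSpace ℝ (Fin d)) {c : ℝ}
    (hc : ∀ t ∈ Set.Icc (0:ℝ) 1, c ≤ hessQF (H (a + t • v)) v) :
    ∀ t ∈ Set.Icc (0:ℝ) 1, ⟪gradient L a, v⟫ + c * t ≤ ⟪gradient L (a + t • v), v⟫ := by
  have h := incr_le (psi_hasDerivAt hH a v) hc
  intro t ht
  have := h t ht
  simpa using this

lemma psi_upper (hH : ∀ x, HasFDerivAt (gradient L)
      (LinearMap.toContinuousLinearMap (Matrix.toEuclideanLin (H x))) x)
    (a v : EuclideanSpace ℝ (Fin d)) {C : ℝ}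
    (hC : ∀ t ∈ Set.Icc (0:ℝ) 1, hessQF (H (a + t • v)) v ≤ C) :
    ∀ t ∈ Set.Icc (0:ℝ) 1, ⟪gradient L (a + t • v), v⟫ ≤ ⟪gradient L a, v⟫ + C * t := by
  have h := decr_le (psi_hasDerivAt hH a v) hC
  intro t ht
  have := h t ht
  simpa using this

lemma taylor_lower (hdiff : ∀ x, HasGradientAt L (gradient L x) x)
    (hH : ∀ x, HasFDerivAt (gradient L)
      (LinearMap.toContinuousLinearMap (Matrix.toEuclideanLin (H x))) x)
    (a v : EuclideanSpace ℝ (Fin d)) {c : ℝ}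
    (hc : ∀ t ∈ Set.Icc (0:ℝ) 1, c ≤ hessQF (H (a + t • v)) v) :
    L a + ⟪gradient L a, v⟫ + c / 2 ≤ L (a + v) := by
  set G : ℝ → ℝ := fun t => L (a + t • v) - (⟪gradient L a, v⟫ * t + c * (t * t) / 2) with hG
  have hGd : ∀ t, HasDerivAt G
      (⟪gradient L (a + t • v), v⟫ - (⟪gradient L a, v⟫ + c * t)) t := by
    intro t
    have h1 := L_line hdiff a v t
    have h2 : HasDerivAt (fun s : ℝ => ⟪gradient L a, v⟫ * s + c * (s * s) / 2)
        (⟪gradient L a, v⟫ + c * t) t := by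
      have := ((hasDerivAt_id t).const_mul (⟪gradient L a, v⟫ : ℝ)).add
        ((((hasDerivAt_id t).mul (hasDerivAt_id t)).const_mul c).div_const 2)
      simp only [id_eq] at this
      exact this.congr_deriv (by ring)
    exact h1.sub h2
  have h0 : ∀ t ∈ Set.Icc (0:ℝ) 1,
      0 ≤ ⟪gradient L (a + t • v), v⟫ - (⟪gradient L a, v⟫ + c * t) := by
    intro t ht
    have := psi_lower hH a v hc t ht
    linarith
  have := incr_le hGd (c := 0) h0 1 (Set.right_mem_Icc.mpr zero_le_one)
  simp only [hG, zero_smul, add_zero, one_smul, mul_one, mul_zero, zero_mul] at this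
  linarith

lemma taylor_upper (hdiff : ∀ x, HasGradientAt L (gradient L x) x)
    (hH : ∀ x, HasFDerivAt (gradient L)
      (LinearMap.toContinuousLinearMap (Matrix.toEuclideanLin (H x))) x)
    (a v : EuclideanSpace ℝ (Fin d)) {C : ℝ}
    (hC : ∀ t ∈ Set.Icc (0:ℝ) 1, hessQF (H (a + t • v)) v ≤ C) :
    L (a + v) ≤ L a + ⟪gradient L a, v⟫ + C / 2 := by
  set G : ℝ → ℝ := fun t => (⟪gradient L a, v⟫ * t + C * (t * t) / 2) - L (a + t • v) with hG
  have hGd : ∀ t, HasDerivAt G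
      ((⟪gradient L a, v⟫ + C * t) - ⟪gradient L (a + t • v), v⟫) t := by
    intro t
    have h1 := L_line hdiff a v t
    have h2 : HasDerivAt (fun s : ℝ => ⟪gradient L a, v⟫ * s + C * (s * s) / 2)
        (⟪gradient L a, v⟫ + C * t) t := by
      have := ((hasDerivAt_id t).const_mul (⟪gradient L a, v⟫ : ℝ)).add
        ((((hasDerivAt_id t).mul (hasDerivAt_id t)).const_mul C).div_const 2)
      simp only [id_eq] at this
      exact this.congr_deriv (by ring)
    exact h2.sub h1
  have h0 : ∀ t ∈ Set.Icc (0:ℝ) 1,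
      0 ≤ (⟪gradient L a, v⟫ + C * t) - ⟪gradient L (a + t • v), v⟫ := by
    intro t ht
    have := psi_upper hH a v hC t ht
    linarith
  have := incr_le hGd (c := 0) h0 1 (Set.right_mem_Icc.mpr zero_le_one)
  simp only [hG, zero_smul, add_zero, one_smul, mul_one, mul_zero, zero_mul] at this
  linarith

lemma inner_grad_incr_upper (hH : ∀ x, HasFDerivAt (gradient L)
      (LinearMap.toContinuousLinearMap (Matrix.toEuclideanLin (H x))) x)
    (a v u : EuclideanSpace ℝ (Fin d)) {C : ℝ}
    (hC : ∀ t ∈ Set.Icc (0:ℝ) 1, ⟪Matrix.toEuclideanLin (H (a + t • v)) v, u⟫ ≤ C) :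
    ⟪gradient L (a + v), u⟫ ≤ ⟪gradient L a, u⟫ + C := by
  have h := decr_le (inner_grad_hasDerivAt hH a v u) hC 1 (Set.right_mem_Icc.mpr zero_le_one)
  simpa using h

end

set_option maxHeartbeats 2000000 in
/-- Lemma 7 (Norm Bound on Inverse Hessian and Gradient Product) -/
theorem stmt_8 (d : ℕ) (hd : 1 ≤ d)
    (L : EuclideanSpace ℝ (Fin d) → ℝ) (hL : ContDiff ℝ 2 L)
    (hconv : StrictConvexOn ℝ Set.univ L)
    (θs : EuclideanSpace ℝ (Fin d))
    (hmin : ∀ θ, θ ≠ θs → L θs < L θ)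
    (hgrad0 : gradient L θs = 0)
    (H : EuclideanSpace ℝ (Fin d) → Matrix (Fin d) (Fin d) ℝ)
    (hH : ∀ x, HasFDerivAt (gradient L)
      (LinearMap.toContinuousLinearMap (Matrix.toEuclideanLin (H x))) x)
    (hpd : ∀ x, (H x).PosDef)
    (μ : ℝ) (hμpos : 0 < μ)
    (hμlb : ∀ v : EuclideanSpace ℝ (Fin d), μ * ‖v‖ ^ 2 ≤ hessQF (H θs) v)
    (hμeig : ∃ v : EuclideanSpace ℝ (Fin d), v ≠ 0 ∧
      Matrix.toEuclideanLin (H θs) v = μ • v)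
    (R : ℝ) (hR : 0 < R)
    (hA2 : ∀ θ θ' : EuclideanSpace ℝ (Fin d), ‖θ - θ'‖ ≤ R →
      ∀ v, (1/2) * hessQF (H θ') v ≤ hessQF (H θ) v ∧
        hessQF (H θ) v ≤ 2 * hessQF (H θ') v)
    (θ : EuclideanSpace ℝ (Fin d))
    (hcond : L θ - L θs ≤ μ * R ^ 2 / 16 ∨ ‖gradient L θ‖ ≤ μ * R / 4) :
    ‖Matrix.toEuclideanLin ((H θ)⁻¹) (gradient L θ)‖ ^ 2 ≤
      8 * (L θ - L θs) / μ := by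
  classical
  have hdiff : ∀ x, HasGradientAt L (gradient L x) x :=
    fun x => ((hL.differentiable (by norm_num)) x).hasGradientAt
  have hmin' : ∀ x, L θs ≤ L x := by
    intro x; by_cases hx : x = θs
    · simp [hx]
    · exact (hmin x hx).le
  have hpsd : ∀ x, (H x).PosSemidef := fun x => (hpd x).posSemidef
  set g : EuclideanSpace ℝ (Fin d) := gradient L θ with hgdef
  set u : EuclideanSpace ℝ (Fin d) := Matrix.toEuclideanLin ((H θ)⁻¹) g with hudef
  set δ : EuclideanSpace ℝ (Fin d) := θ - θs with hδdef
  have hθδ : θs + δ = θ := by rw [hδdef]; abel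
  -- Step A : ‖θ - θs‖ ≤ R
  have hδR : ‖δ‖ ≤ R := by
    by_contra hgt
    push_neg at hgt
    have hnpos : (0:ℝ) < ‖δ‖ := hR.trans hgt
    set w : EuclideanSpace ℝ (Fin d) := (R / ‖δ‖) • δ with hwdef
    have hwnorm : ‖w‖ = R := by
      rw [hwdef, norm_smul, Real.norm_eq_abs, abs_of_nonneg (by positivity)]
      field_simp
    have hclow : ∀ t ∈ Set.Icc (0:ℝ) 1, μ * R ^ 2 / 2 ≤ hessQF (H (θs + t • w)) w := by
      intro t ht
      have hdist : ‖(θs + t • w) - θs‖ ≤ R := by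
        have : (θs + t • w) - θs = t • w := by abel
        rw [this, norm_smul, Real.norm_eq_abs, abs_of_nonneg ht.1, hwnorm]
        nlinarith [ht.2, hR]
      have h1 := (hA2 (θs + t • w) θs hdist w).1
      have h2 := hμlb w
      rw [hwnorm] at h2
      linarith
    have hL1 : L θs + μ * R ^ 2 / 4 ≤ L (θs + w) := by
      have h := taylor_lower hdiff hH θs w hclow
      rw [hgrad0] at h
      simp only [inner_zero_left] at h
      linarith
    have hg1 : μ * R ^ 2 / 2 ≤ ⟪gradient L (θs + w), w⟫ := by
      have h := psi_lower hH θs w hclow 1 (Set.right_mem_Icc.mpr zero_le_one)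
      rw [hgrad0] at h
      simp only [inner_zero_left, one_smul, mul_one, zero_add] at h
      exact h
    set k : ℝ := ‖δ‖ / R - 1 with hkdef
    have hkpos : 0 < k := by
      rw [hkdef]
      have : (1:ℝ) < ‖δ‖ / R := (one_lt_div hR).mpr hgt
      linarith
    have hrw : (θs + w) + k • w = θ := by
      have hsum : w + k • w = δ := by
        rw [hwdef, smul_smul]
        rw [← one_smul ℝ δ, smul_smul, smul_smul, ← add_smul]
        congr 1
        rw [hkdef]
        field_simp
        rw [one_smul, add_sub_cancel, div_self hnpos.ne']
      calc (θs + w) + k • w = θs + (w + k • w) := by abel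
        _ = θs + δ := by rw [hsum]
        _ = θ := hθδ
    have h0hess : ∀ t ∈ Set.Icc (0:ℝ) 1,
        (0:ℝ) ≤ hessQF (H ((θs + w) + t • (k • w))) (k • w) :=
      fun t _ => hessQF_nonneg (hpsd _) _
    have hmono := psi_lower hH (θs + w) (k • w) h0hess 1 (Set.right_mem_Icc.mpr zero_le_one)
    simp only [one_smul, mul_one, zero_mul, add_zero, mul_zero] at hmono
    rw [hrw] at hmono
    -- hmono : ⟪gradient L (θs+w), k•w⟫ + 0 ≤ ⟪gradient L θ, k•w⟫
    have e1 := real_inner_smul_right (gradient L (θs + w)) w k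
    have e2 := real_inner_smul_right (gradient L θ) w k
    rw [e1, e2] at hmono
    have hgθw : μ * R ^ 2 / 2 ≤ ⟪gradient L θ, w⟫ := by
      have := (mul_le_mul_iff_right₀ hkpos).mp hmono
      linarith
    have hLθ : L θs + μ * R ^ 2 / 4 ≤ L θ := by
      have htay := taylor_lower hdiff hH (θs + w) (k • w) h0hess
      rw [hrw] at htay
      have hnn : 0 ≤ ⟪gradient L (θs + w), k • w⟫ := by
        rw [real_inner_smul_right (gradient L (θs + w)) w k]
        have : 0 ≤ ⟪gradient L (θs + w), w⟫ := by nlinarith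
        exact mul_nonneg hkpos.le this
      linarith
    rcases hcond with h1 | h2
    · nlinarith [mul_pos hμpos (mul_pos hR hR)]
    · have hcs := real_inner_le_norm (gradient L θ) w
      rw [hwnorm] at hcs
      nlinarith [mul_pos hμpos hR]
  -- Step B : basic facts about u and S
  have hHu : Matrix.toEuclideanLin (H θ) u = g := toEuclideanLin_inv_cancel (hpd θ) g
  set S : ℝ := ⟪u, g⟫ with hSdef
  have hSq : hessQF (H θ) u = S := by
    have : hessQF (H θ) u = ⟪u, Matrix.toEuclideanLin (H θ) u⟫ := rfl
    rw [this, hHu]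
  have hθθs : ‖θ - θs‖ ≤ R := by rw [← hδdef]; exact hδR
  have hlowθ : ∀ v : EuclideanSpace ℝ (Fin d), μ / 2 * ‖v‖ ^ 2 ≤ hessQF (H θ) v := by
    intro v
    have h1 := (hA2 θ θs hθθs v).1
    have h2 := hμlb v
    linarith
  have hS_norm : μ / 2 * ‖u‖ ^ 2 ≤ S := by
    have := hlowθ u
    rw [hSq] at this
    exact this
  have hS0 : 0 ≤ S := le_trans (by positivity) hS_norm
  -- facts about Q
  have hQmem : ∀ t ∈ Set.Icc (0:ℝ) 1, ‖(θs + t • δ) - θs‖ ≤ R := by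
    intro t ht
    have : (θs + t • δ) - θs = t • δ := by abel
    rw [this, norm_smul, Real.norm_eq_abs, abs_of_nonneg ht.1]
    nlinarith [ht.2, hδR, norm_nonneg δ, hR]
  have hQmem' : ∀ t ∈ Set.Icc (0:ℝ) 1, ‖(θs + t • δ) - θ‖ ≤ R := by
    intro t ht
    have : (θs + t • δ) - θ = (t - 1) • δ := by
      rw [← hθδ]; rw [sub_smul, one_smul]; abel
    rw [this, norm_smul, Real.norm_eq_abs, abs_of_nonpos (by linarith [ht.2] : t - 1 ≤ 0)]
    nlinarith [ht.1, hδR, norm_nonneg δ, hR]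
  set Q : ℝ := hessQF (H θs) δ with hQdef
  have hQ0 : 0 ≤ Q := hessQF_nonneg (hpsd θs) δ
  have hQ4 : Q ≤ 4 * (L θ - L θs) := by
    have hc : ∀ t ∈ Set.Icc (0:ℝ) 1, Q / 2 ≤ hessQF (H (θs + t • δ)) δ := by
      intro t ht
      have := (hA2 (θs + t • δ) θs (hQmem t ht) δ).1
      linarith
    have htay := taylor_lower hdiff hH θs δ hc
    rw [hθδ, hgrad0] at htay
    simp only [inner_zero_left] at htay
    linarith
  -- S ≤ 4 Q
  have hS4Q : S ≤ 4 * Q := by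
    have hCb : ∀ t ∈ Set.Icc (0:ℝ) 1,
        ⟪Matrix.toEuclideanLin (H (θs + t • δ)) δ, u⟫ ≤ S / 2 + 2 * Q := by
      intro t ht
      have hcs := hessQF_cs (hpsd (θs + t • δ)) u δ
      have hu2 : hessQF (H (θs + t • δ)) u ≤ 2 * S := by
        have := (hA2 (θs + t • δ) θ (hQmem' t ht) u).2
        rw [hSq] at this
        exact this
      have hd2 : hessQF (H (θs + t • δ)) δ ≤ 2 * Q := by
        exact (hA2 (θs + t • δ) θs (hQmem t ht) δ).2
      have hun : 0 ≤ hessQF (H (θs + t • δ)) u := hessQF_nonneg (hpsd _) u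
      have hdn : 0 ≤ hessQF (H (θs + t • δ)) δ := hessQF_nonneg (hpsd _) δ
      have hcomm : ⟪Matrix.toEuclideanLin (H (θs + t • δ)) δ, u⟫
          = ⟪u, Matrix.toEuclideanLin (H (θs + t • δ)) δ⟫ := real_inner_comm _ _
      rw [hcomm]
      nlinarith [sq_nonneg (S / 2 + 2 * Q - ⟪u, Matrix.toEuclideanLin (H (θs + t • δ)) δ⟫),
        sq_nonneg (S / 2 - 2 * Q)]
    have hincr := inner_grad_incr_upper hH θs δ u hCb
    rw [hθδ, hgrad0] at hincr
    simp only [inner_zero_left, zero_add] at hincr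
    have : S = ⟪g, u⟫ := real_inner_comm g u
    rw [← this] at hincr
    linarith
  -- ‖u‖ ≤ 2 R
  have hu2R : ‖u‖ ≤ 2 * R := by
    rcases hcond with h1 | h2
    · -- S ≤ 4Q ≤ 16 (L θ - L θs) ≤ μ R²
      have hSμR : S ≤ μ * R ^ 2 := by nlinarith
      by_contra hcon
      push_neg at hcon
      have h4 : 4 * R ^ 2 < ‖u‖ ^ 2 := by nlinarith [hR, hcon]
      have h5 := mul_lt_mul_of_pos_left h4 (half_pos hμpos)
      have h6 : 0 < μ * R ^ 2 := by positivity
      linarith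
    · -- ‖u‖ ≤ 2‖g‖/μ ≤ R/2
      have hcs : S ≤ ‖u‖ * ‖g‖ := real_inner_le_norm u g
      by_contra hcon
      push_neg at hcon
      have hu0 : 0 < ‖u‖ := lt_trans (by positivity) hcon
      have k1 : ‖u‖ * ‖g‖ ≤ ‖u‖ * (μ * R / 4) := mul_le_mul_of_nonneg_left h2 (norm_nonneg u)
      have k2 : μ / 2 * ‖u‖ ^ 2 ≤ ‖u‖ * (μ * R / 4) := le_trans (le_trans hS_norm hcs) k1
      nlinarith [k2, mul_pos hμpos hu0, mul_pos (mul_pos hμpos hR) hu0, hcon]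
  -- Final Newton-step argument
  set v : EuclideanSpace ℝ (Fin d) := (-(1/2) : ℝ) • u with hvdef
  have hCb : ∀ t ∈ Set.Icc (0:ℝ) 1, hessQF (H (θ + t • v)) v ≤ (S / 2) := by
    intro t ht
    have hdist : ‖(θ + t • v) - θ‖ ≤ R := by
      have : (θ + t • v) - θ = t • v := by abel
      rw [this, norm_smul, Real.norm_eq_abs, abs_of_nonneg ht.1, hvdef, norm_smul]
      rw [Real.norm_eq_abs]
      have : |(-(1/2) : ℝ)| = 1/2 := by norm_num
      rw [this]
      nlinarith [ht.1, ht.2, hu2R, norm_nonneg u, hR]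
    have h2 := (hA2 (θ + t • v) θ hdist v).2
    have hq : hessQF (H θ) v = (1/4) * S := by
      rw [hvdef, hessQF_smul, hSq]; norm_num
    rw [hq] at h2
    linarith
  have htay := taylor_upper hdiff hH θ v hCb
  have hiv : ⟪gradient L θ, v⟫ = -(1/2) * S := by
    rw [hvdef, real_inner_smul_right]
    have : ⟪gradient L θ, u⟫ = S := real_inner_comm u g
    rw [this]
  rw [hiv] at htay
  have hminv := hmin' (θ + v)
  have hSfin : S ≤ 4 * (L θ - L θs) := by linarith
  rw [le_div_iff₀ hμpos]
  have : μ / 2 * ‖u‖ ^ 2 ≤ 4 * (L θ - L θs) := le_trans hS_norm hSfin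
  nlinarith [hS_norm, hSfin]
end

section
/- Let η > 0 and λ > 0 satisfy η λ ≤ R / √d, and let θ⁺ = θ − η · V · clip(Σ⁻¹ Vᵀ ∇L(θ), λ) be the clipped Newton step at θ. Then L(θ⁺) − L(θ) ≤ −(η − η²) · Σⱼ min{ λ·|vⱼᵀ∇L(θ)|, σⱼ⁻¹·(vⱼᵀ∇L(θ))² } (Lemma 10, Descent Lemma). -/
open Matrix Filter
open scoped RealInnerProductSpace

/-- Coordinatewise clipping to the interval [-λ, λ]. -/
def clipR (lam x : ℝ) : ℝ := max (min x lam) (-lam)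

/-- One-dimensional Taylor-type bound: if `φ` has derivative `φ'`, `φ'` has derivative `φ''`,
and `φ'' ≤ C` on `[0,1]`, then `φ 1 ≤ φ 0 + φ' 0 + C / 2`. -/
lemma taylor_aux (φ φ' φ'' : ℝ → ℝ) (C : ℝ)
    (h1 : ∀ t, HasDerivAt φ (φ' t) t)
    (h2 : ∀ t, HasDerivAt φ' (φ'' t) t)
    (h3 : ∀ t ∈ Set.Icc (0:ℝ) 1, φ'' t ≤ C) :
    φ 1 ≤ φ 0 + φ' 0 + C / 2 := by
  have step1 : ∀ t ∈ Set.Icc (0:ℝ) 1, φ' t ≤ φ' 0 + C * t := by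
    intro t ht
    have hderiv : ∀ s : ℝ, HasDerivAt (fun s => φ' s - C * s) (φ'' s - C) s := by
      intro s
      have := (h2 s).sub ((hasDerivAt_id s).const_mul C)
      simp only [mul_one] at this
      exact this
    have hanti : AntitoneOn (fun s => φ' s - C * s) (Set.Icc 0 1) := by
      apply antitoneOn_of_deriv_nonpos (convex_Icc 0 1)
      · exact fun s _ => ((hderiv s).continuousAt).continuousWithinAt
      · exact fun s _ => ((hderiv s).differentiableAt).differentiableWithinAt
      · intro s hs
        rw [(hderiv s).deriv]
        rw [interior_Icc] at hs
        have := h3 s ⟨le_of_lt hs.1, le_of_lt hs.2⟩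
        linarith
    have := hanti (Set.left_mem_Icc.2 zero_le_one) ht ht.1
    simp only [mul_zero, sub_zero] at this
    linarith
  have hderiv2 : ∀ s : ℝ, HasDerivAt (fun t => φ t - φ' 0 * t - C * t ^ 2 / 2)
      (φ' s - φ' 0 - C * s) s := by
    intro s
    have h1' := (h1 s).sub ((hasDerivAt_id s).const_mul (φ' 0))
    have h2' : HasDerivAt (fun t : ℝ => C * t ^ 2 / 2) (C * s) s := by
      have := ((hasDerivAt_pow 2 s).const_mul C).div_const 2
      exact this.congr_deriv (by rw [show (2:ℕ) - 1 = 1 from rfl]; push_cast; ring)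
    exact (h1'.sub h2').congr_deriv (by ring)
  have hanti2 : AntitoneOn (fun t => φ t - φ' 0 * t - C * t ^ 2 / 2) (Set.Icc 0 1) := by
    apply antitoneOn_of_deriv_nonpos (convex_Icc 0 1)
    · exact fun s _ => ((hderiv2 s).continuousAt).continuousWithinAt
    · exact fun s _ => ((hderiv2 s).differentiableAt).differentiableWithinAt
    · intro s hs
      rw [(hderiv2 s).deriv]
      rw [interior_Icc] at hs
      have := step1 s ⟨le_of_lt hs.1, le_of_lt hs.2⟩
      linarith
  have := hanti2 (Set.left_mem_Icc.2 zero_le_one) (Set.right_mem_Icc.2 zero_le_one) zero_le_one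
  simp only [mul_zero, sub_zero, mul_one, one_pow] at this
  linarith

/-- Key pointwise facts about clipping. -/
lemma clip_facts (σ lam g : ℝ) (hσ : 0 < σ) (hlam : 0 < lam) :
    g * clipR lam (σ⁻¹ * g) = min (lam * |g|) (σ⁻¹ * g ^ 2) ∧
    σ * (clipR lam (σ⁻¹ * g)) ^ 2 ≤ g * clipR lam (σ⁻¹ * g) := by
  have hσ' : 0 < σ⁻¹ := inv_pos.2 hσ
  have hcan : σ * (σ⁻¹ * g) = g := by field_simp
  unfold clipR
  rcases le_total 0 g with hg | hg
  · have hx : 0 ≤ σ⁻¹ * g := mul_nonneg hσ'.le hg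
    rw [max_eq_left (le_trans (neg_nonpos.2 hlam.le) (le_min hx hlam.le))]
    rw [abs_of_nonneg hg]
    constructor
    · rw [mul_min_of_nonneg _ _ hg, min_comm]
      ring_nf
    · rcases min_cases (σ⁻¹ * g) lam with ⟨h, _⟩ | ⟨h, hle⟩ <;> rw [h]
      · nlinarith
      · nlinarith [mul_lt_mul_of_pos_left hle hσ]
  · have hx : σ⁻¹ * g ≤ 0 := mul_nonpos_of_nonneg_of_nonpos hσ'.le hg
    rw [min_eq_left (le_trans hx hlam.le), abs_of_nonpos hg]
    constructor
    · rcases max_cases (σ⁻¹ * g) (-lam) with ⟨h, hle⟩ | ⟨h, hle⟩ <;> rw [h]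
      · rw [min_eq_right]
        · field_simp
        · nlinarith
      · rw [min_eq_left]
        · ring
        · nlinarith
    · rcases max_cases (σ⁻¹ * g) (-lam) with ⟨h, hle⟩ | ⟨h, hle⟩ <;> rw [h]
      · nlinarith
      · nlinarith [mul_lt_mul_of_pos_left hle hσ]

/-- Multiplication by a matrix with orthonormal columns preserves the sum of squares. -/
lemma sum_sq_mulVec (d : ℕ) (V : Matrix (Fin d) (Fin d) ℝ) (hV : Vᵀ * V = 1)
    (u : Fin d → ℝ) : ∑ j, (V.mulVec u j) ^ 2 = ∑ j, (u j) ^ 2 := by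
  have key : (V.mulVec u) ᵥ* V = u := by
    rw [← Matrix.mulVec_transpose, Matrix.mulVec_mulVec, hV, Matrix.one_mulVec]
  calc ∑ j, (V.mulVec u j) ^ 2 = (V.mulVec u) ⬝ᵥ (V.mulVec u) := by
        simp [dotProduct, sq]
    _ = ((V.mulVec u) ᵥ* V) ⬝ᵥ u := Matrix.dotProduct_mulVec _ _ _
    _ = u ⬝ᵥ u := by rw [key]
    _ = ∑ j, (u j) ^ 2 := by simp [dotProduct, sq]

/-- Quadratic form in diagonalizing coordinates. -/
lemma qf_diag (d : ℕ) (V A : Matrix (Fin d) (Fin d) ℝ) (σ : Fin d → ℝ)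
    (hdiag : Vᵀ * A * V = Matrix.diagonal σ) (u : Fin d → ℝ) :
    (V.mulVec u) ⬝ᵥ (A.mulVec (V.mulVec u)) = ∑ j, σ j * (u j) ^ 2 := by
  calc (V.mulVec u) ⬝ᵥ (A.mulVec (V.mulVec u))
      = ((V.mulVec u) ᵥ* A) ⬝ᵥ (V.mulVec u) := Matrix.dotProduct_mulVec _ _ _
    _ = (((V.mulVec u) ᵥ* A) ᵥ* V) ⬝ᵥ u := Matrix.dotProduct_mulVec _ _ _
    _ = (u ᵥ* (Vᵀ * A * V)) ⬝ᵥ u := by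
        rw [Matrix.vecMul_vecMul, ← Matrix.vecMul_transpose, Matrix.vecMul_vecMul,
          Matrix.mul_assoc]
    _ = ∑ j, σ j * (u j) ^ 2 := by
        rw [hdiag]
        simp [dotProduct, Matrix.vecMul_diagonal, sq]
        exact Finset.sum_congr rfl fun j _ => by ring

/-- Lemma 10 (Descent Lemma): the clipped Newton step decreases the loss by at least (η - η²) times the clipped quantity. -/
theorem stmt_13 (d : ℕ) (hd : 1 ≤ d)
    (L : EuclideanSpace ℝ (Fin d) → ℝ) (hL : ContDiff ℝ 2 L)
    (hconv : StrictConvexOn ℝ Set.univ L)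
    (θs : EuclideanSpace ℝ (Fin d))
    (hmin : ∀ θ, θ ≠ θs → L θs < L θ)
    (hgrad0 : gradient L θs = 0)
    (H : EuclideanSpace ℝ (Fin d) → Matrix (Fin d) (Fin d) ℝ)
    (hH : ∀ x, HasFDerivAt (gradient L)
      (LinearMap.toContinuousLinearMap (Matrix.toEuclideanLin (H x))) x)
    (hpd : ∀ x, (H x).PosDef)
    (μ : ℝ) (hμpos : 0 < μ)
    (hμlb : ∀ v : EuclideanSpace ℝ (Fin d), μ * ‖v‖ ^ 2 ≤ hessQF (H θs) v)
    (hμeig : ∃ v : EuclideanSpace ℝ (Fin d), v ≠ 0 ∧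
      Matrix.toEuclideanLin (H θs) v = μ • v)
    (R : ℝ) (hR : 0 < R)
    (hA2 : ∀ θ θ' : EuclideanSpace ℝ (Fin d), ‖θ - θ'‖ ≤ R →
      ∀ v, (1/2) * hessQF (H θ') v ≤ hessQF (H θ) v ∧
        hessQF (H θ) v ≤ 2 * hessQF (H θ') v)
    (θ : EuclideanSpace ℝ (Fin d))
    (V : Matrix (Fin d) (Fin d) ℝ) (hV : Vᵀ * V = 1)
    (σ : Fin d → ℝ) (hσ : ∀ j, 0 < σ j)
    (hdiag : Vᵀ * H θ * V = Matrix.diagonal σ)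
    (η lam : ℝ) (hη : 0 < η) (hlam : 0 < lam)
    (hηlam : η * lam ≤ R / Real.sqrt d)
    (θp : EuclideanSpace ℝ (Fin d))
    (hθp : θp = θ - η • (WithLp.equiv 2 (Fin d → ℝ)).symm
      (V.mulVec (fun j => clipR lam ((σ j)⁻¹ *
        Matrix.vecMul ((WithLp.equiv 2 (Fin d → ℝ)) (gradient L θ)) V j)))) :
    L θp - L θ ≤ -(η - η ^ 2) * ∑ j, min
      (lam * |Matrix.vecMul ((WithLp.equiv 2 (Fin d → ℝ)) (gradient L θ)) V j|)
      ((σ j)⁻¹ *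
        (Matrix.vecMul ((WithLp.equiv 2 (Fin d → ℝ)) (gradient L θ)) V j) ^ 2) := by
  set G : Fin d → ℝ := (WithLp.equiv 2 (Fin d → ℝ)) (gradient L θ) with hG
  set g : Fin d → ℝ := Matrix.vecMul G V with hgdef
  set u : Fin d → ℝ := fun j => clipR lam ((σ j)⁻¹ * g j) with hudef
  set x : EuclideanSpace ℝ (Fin d) := (WithLp.equiv 2 (Fin d → ℝ)).symm (V.mulVec u) with hxdef
  set w : EuclideanSpace ℝ (Fin d) := (-η) • x with hwdef
  have hθpw : θp = θ + w := by
    rw [hθp, hwdef]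
    module
  -- ‖w‖ ≤ R
  have hdpos : (0:ℝ) < Real.sqrt d :=
    Real.sqrt_pos.2 (by exact_mod_cast Nat.lt_of_lt_of_le Nat.zero_lt_one hd)
  have hulam : ∀ j, (u j) ^ 2 ≤ lam ^ 2 := by
    intro j
    have h1 : u j ≤ lam := max_le (min_le_right _ _) (by linarith)
    have h2 : -lam ≤ u j := le_max_right _ _
    exact sq_le_sq' h2 h1
  have hxnorm : ‖x‖ ≤ lam * Real.sqrt d := by
    have hxe : ‖x‖ = Real.sqrt (∑ j, (V.mulVec u j) ^ 2) := by
      rw [hxdef, EuclideanSpace.norm_eq]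
      simp [sq_abs, sq]
    rw [hxe, sum_sq_mulVec d V hV u]
    have hsum : ∑ j, (u j) ^ 2 ≤ (d : ℝ) * lam ^ 2 := by
      calc ∑ j, (u j) ^ 2 ≤ ∑ _j : Fin d, lam ^ 2 := Finset.sum_le_sum fun j _ => hulam j
        _ = (d : ℝ) * lam ^ 2 := by simp [mul_comm]
    calc Real.sqrt (∑ j, (u j) ^ 2) ≤ Real.sqrt ((d:ℝ) * lam ^ 2) := Real.sqrt_le_sqrt hsum
      _ = Real.sqrt d * lam := by
          rw [Real.sqrt_mul (by positivity), Real.sqrt_sq hlam.le]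
      _ = lam * Real.sqrt d := mul_comm _ _
  have hwnorm : ‖w‖ ≤ R := by
    have : ‖w‖ = η * ‖x‖ := by
      rw [hwdef, norm_smul]
      simp [abs_of_pos hη]
    rw [this]
    calc η * ‖x‖ ≤ η * (lam * Real.sqrt d) :=
          mul_le_mul_of_nonneg_left hxnorm hη.le
      _ = (η * lam) * Real.sqrt d := by ring
      _ ≤ (R / Real.sqrt d) * Real.sqrt d :=
          mul_le_mul_of_nonneg_right hηlam hdpos.le
      _ = R := by field_simp
  -- derivatives along the segment
  set c : ℝ → EuclideanSpace ℝ (Fin d) := fun t => θ + t • w with hc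
  have hLdiff : Differentiable ℝ L := hL.differentiable (by norm_num)
  have hcd : ∀ t : ℝ, HasDerivAt c w t := by
    intro t
    exact (((hasDerivAt_id t).smul_const w).const_add θ).congr_deriv (one_smul _ _)
  have h1 : ∀ t : ℝ, HasDerivAt (fun t => L (c t)) ⟪gradient L (c t), w⟫ t := by
    intro t
    have hg := (hLdiff (c t)).hasGradientAt
    have := hg.hasFDerivAt.comp_hasDerivAt t (hcd t)
    simpa [Function.comp_def, InnerProductSpace.toDual_apply_apply] using this
  have h2 : ∀ t : ℝ, HasDerivAt (fun t => ⟪gradient L (c t), w⟫)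
      ⟪(Matrix.toEuclideanLin (H (c t))) w, w⟫ t := by
    intro t
    have hgc : HasDerivAt (fun t => gradient L (c t))
        ((Matrix.toEuclideanLin (H (c t))) w) t := by
      have := (hH (c t)).comp_hasDerivAt t (hcd t)
      simpa [Function.comp_def] using this
    have := hgc.inner ℝ (hasDerivAt_const t w)
    simpa using this
  -- second-derivative bound along the segment
  set Q : ℝ := hessQF (H θ) w with hQdef
  have h3 : ∀ t ∈ Set.Icc (0:ℝ) 1, ⟪(Matrix.toEuclideanLin (H (c t))) w, w⟫ ≤ 2 * Q := by
    intro t ht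
    have hdist : ‖c t - θ‖ ≤ R := by
      have hseg : c t - θ = t • w := by
        simp [hc]
      rw [hseg, norm_smul]
      calc |t| * ‖w‖ ≤ 1 * ‖w‖ := by
            apply mul_le_mul_of_nonneg_right _ (norm_nonneg w)
            rw [abs_of_nonneg ht.1]; exact ht.2
        _ = ‖w‖ := one_mul _
        _ ≤ R := hwnorm
    have := (hA2 (c t) θ hdist w).2
    unfold hessQF at this
    rwa [real_inner_comm]
  -- taylor bound
  have htay := taylor_aux (fun t => L (c t)) (fun t => ⟪gradient L (c t), w⟫)
    (fun t => ⟪(Matrix.toEuclideanLin (H (c t))) w, w⟫) (2 * Q) h1 h2 h3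
  have hc0 : c 0 = θ := by simp [hc]
  have hc1 : c 1 = θp := by rw [hc, hθpw]; simp
  simp only [hc0, hc1] at htay
  -- identify the first-order term
  have hgradx : gradient L θ = (WithLp.equiv 2 (Fin d → ℝ)).symm G := by
    rw [hG]; simp
  have hinner_dot : ∀ a b : Fin d → ℝ,
      ⟪(WithLp.equiv 2 (Fin d → ℝ)).symm a, (WithLp.equiv 2 (Fin d → ℝ)).symm b⟫
        = a ⬝ᵥ b := by
    intro a b
    simp [dotProduct, PiLp.inner_apply, mul_comm]
  have hA : ⟪gradient L θ, w⟫ = -η * ∑ j, g j * u j := by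
    rw [hwdef, real_inner_smul_right, hgradx, hxdef, hinner_dot,
      Matrix.dotProduct_mulVec, ← hgdef]
    simp [dotProduct]
  -- identify the second-order term
  have hQval : Q = η ^ 2 * ∑ j, σ j * (u j) ^ 2 := by
    unfold hessQF at hQdef
    rw [hQdef, hwdef, _root_.map_smul, real_inner_smul_left, real_inner_smul_right,
      hxdef, Matrix.toEuclideanLin_apply_piLp_toLp]
    erw [hinner_dot]
    rw [show ((WithLp.equiv 2 (Fin d → ℝ)).symm (V *ᵥ u)).ofLp = V *ᵥ u from rfl, qf_diag d V (H θ) σ hdiag u]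
    ring
  -- pointwise clipping facts
  have hclip : ∀ j, g j * u j = min (lam * |g j|) ((σ j)⁻¹ * (g j) ^ 2) ∧
      σ j * (u j) ^ 2 ≤ g j * u j := fun j => clip_facts (σ j) lam (g j) (hσ j) hlam
  have hSsum : ∑ j, g j * u j
      = ∑ j, min (lam * |g j|) ((σ j)⁻¹ * (g j) ^ 2) :=
    Finset.sum_congr rfl fun j _ => (hclip j).1
  have hTS : ∑ j, σ j * (u j) ^ 2 ≤ ∑ j, g j * u j :=
    Finset.sum_le_sum fun j _ => (hclip j).2
  -- combine
  rw [← hSsum]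
  have hmul := mul_le_mul_of_nonneg_left hTS (sq_nonneg η)
  have e1 : L θp - L θ ≤ -η * (∑ j, g j * u j) + η ^ 2 * ∑ j, σ j * (u j) ^ 2 := by
    linarith [htay, hA, hQval]
  calc L θp - L θ ≤ -η * (∑ j, g j * u j) + η ^ 2 * ∑ j, σ j * (u j) ^ 2 := e1
    _ ≤ -η * (∑ j, g j * u j) + η ^ 2 * ∑ j, g j * u j := by linarith
    _ = -(η - η ^ 2) * ∑ j, g j * u j := by ring
end
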